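/- arXiv:1811.09695 — 5 statements merged into one kernel-verified Lean document; each statement's English description precedes it below -/
import Mathlib

section
/- Let W be a binary-input discrete memoryless channel with finite output alphabet 𝒵, with Q_0 = W(·|0) everywhere positive and Q_1 = W(·|1) ≠ Q_0. Let 1 ≤ k ≤ n and let G ∈ F_2^{k×n} have rank k, defining the (n,k) binary linear code {vG : v ∈ F_2^k}. Let Q̂^n be the pmf on 𝒵^n given by Q̂^n(z) = 2^{−k} Σ_{v∈F_2^k} W^{⊗n}(z | vG). Then there exists a set A ⊆ 𝒵^n (a deterministic binary hypothesis test) such that Q_0^{⊗n}(A) ≤ 16/(k·χ_2(Q_1‖Q_0)) and Q̂^n(𝒵^n ∖ A) ≤ (1/k)·(16/χ_2(Q_1‖Q_0) + 8·χ_3(Q_1‖Q_0)/χ_2(Q_1‖Q_0)^2 − 4). -/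
open Finset

/-- `P` is a probability mass function on a finite alphabet. -/
def IsPMF {𝒵 : Type} [Fintype 𝒵] (P : 𝒵 → ℝ) : Prop :=
  (∀ z, 0 ≤ P z) ∧ ∑ z, P z = 1

/-- `n`-fold memoryless extension of the binary-input channel `W`:
`W^{⊗n}(z|x) = ∏_t W(z_t|x_t)`. -/
noncomputable def prodCh {𝒵 : Type} (W : Bool → 𝒵 → ℝ) (n : ℕ)
    (z : Fin n → 𝒵) (x : Fin n → Bool) : ℝ :=
  ∏ t, W (x t) (z t)

/-- `χ_t(Q1‖Q0) = ∑_z (Q1(z)-Q0(z))^t / Q0(z)^{t-1}`. -/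
noncomputable def chiDiv {𝒵 : Type} [Fintype 𝒵] (t : ℕ) (Q1 Q0 : 𝒵 → ℝ) : ℝ :=
  ∑ z, (Q1 z - Q0 z) ^ t / (Q0 z) ^ (t - 1)



lemma sum_pi_prod {ι 𝒴 : Type} [Fintype ι] [DecidableEq ι] [Fintype 𝒴] (g : ι → 𝒴 → ℝ) :
    ∑ z : ι → 𝒴, ∏ t, g t (z t) = ∏ t, ∑ y, g t y := by
  rw [Finset.prod_univ_sum]
  rw [Fintype.piFinset_univ]

lemma prod_exp {𝒵 : Type} [Fintype 𝒵] [DecidableEq 𝒵] {n k : ℕ}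
    (P : Fin n → 𝒵 → ℝ) (hP : ∀ t, ∑ y, P t y = 1)
    (ι : Fin k → Fin n) (hι : Function.Injective ι) (h : Fin k → 𝒵 → ℝ) :
    ∑ z : Fin n → 𝒵, (∏ t, P t (z t)) * (∏ i, h i (z (ι i)))
      = ∏ i, ∑ y, P (ι i) y * h i y := by
  have step1 : ∀ z : Fin n → 𝒵, (∏ t, P t (z t)) * (∏ i, h i (z (ι i)))
      = ∏ t, (P t (z t) * ∏ i, if ι i = t then h i (z t) else 1) := by
    intro z
    rw [Finset.prod_mul_distrib]
    congr 1
    rw [Finset.prod_comm]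
    apply Finset.prod_congr rfl
    intro i _
    symm
    calc (∏ t, if ι i = t then h i (z t) else 1)
        = if ι i ∈ univ then h i (z (ι i)) else 1 := Finset.prod_ite_eq _ _ _
      _ = h i (z (ι i)) := by simp
  simp only [step1]
  rw [sum_pi_prod (fun t y => P t y * ∏ i, if ι i = t then h i y else 1)]
  rw [← Finset.prod_mul_prod_compl (univ.image ι)]
  have h2 : ∀ t ∈ (univ.image ι)ᶜ, (∑ y, P t y * ∏ i, if ι i = t then h i y else 1) = 1 := by
    intro t ht
    rw [Finset.mem_compl, Finset.mem_image] at ht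
    push_neg at ht
    have : ∀ y, (∏ i : Fin k, if ι i = t then h i y else 1) = 1 := by
      intro y
      apply Finset.prod_eq_one
      intro i _
      simp [ht i (Finset.mem_univ i)]
    simp only [this, mul_one]
    exact hP t
  rw [Finset.prod_congr rfl h2, Finset.prod_const_one, mul_one]
  rw [Finset.prod_image (fun i _ j _ hij => hι hij)]
  apply Finset.prod_congr rfl
  intro i _
  apply Finset.sum_congr rfl
  intro y _
  congr 1
  calc (∏ i', if ι i' = ι i then h i' y else 1)
      = ∏ i', if i' = i then h i' y else 1 := by
        apply Finset.prod_congr rfl; intro i' _; simp [hι.eq_iff]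
    _ = h i y := by rw [Finset.prod_ite_eq']; simp

lemma moments {𝒵 α : Type} [Fintype 𝒵] [Fintype α] (k : ℕ) (μ : α → ℝ)
    (proj : Fin k → α → 𝒵) (m : 𝒵 → ℝ) (hm1 : ∑ y, m y = 1)
    (H : ∀ h : Fin k → 𝒵 → ℝ, ∑ a, μ a * ∏ i, h i (proj i a) = ∏ i, ∑ y, m y * h i y)
    (f : 𝒵 → ℝ) (b : ℝ) :
    ∑ a, μ a * (∑ i, f (proj i a) - b)^2
      = k * (∑ y, m y * f y^2) + ((k:ℝ)^2 - k) * (∑ y, m y * f y)^2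
        - 2*b*(k * (∑ y, m y * f y)) + b^2 := by
  have h0 : ∑ a, μ a = 1 := by
    have := H (fun _ _ => 1); simpa [hm1] using this
  have h1 : ∀ i, ∑ a, μ a * f (proj i a) = ∑ y, m y * f y := by
    intro i
    have key := H (fun j y => if j = i then f y else 1)
    have lhs1 : ∀ a, (∏ j, if j = i then f (proj j a) else 1) = f (proj i a) := by
      intro a; rw [Finset.prod_ite_eq']; simp
    have rhs1 : ∀ j : Fin k, (∑ y, m y * (if j = i then f y else 1))
        = if j = i then (∑ y, m y * f y) else 1 := by
      intro j; by_cases hji : j = i <;> simp [hji, hm1]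
    simp only [lhs1, rhs1] at key
    rw [key, Finset.prod_ite_eq']; simp
  have h2 : ∀ i j, ∑ a, μ a * (f (proj i a) * f (proj j a))
      = if i = j then (∑ y, m y * f y^2) else (∑ y, m y * f y)^2 := by
    intro i j
    by_cases hij : i = j
    · subst hij
      have key := H (fun l y => if l = i then f y ^ 2 else 1)
      have lhs1 : ∀ a, (∏ l, if l = i then f (proj l a) ^ 2 else 1)
          = f (proj i a) * f (proj i a) := by
        intro a; rw [Finset.prod_ite_eq']; simp [sq]
      have rhs1 : ∀ l : Fin k, (∑ y, m y * (if l = i then f y ^ 2 else 1))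
          = if l = i then (∑ y, m y * f y ^ 2) else 1 := by
        intro l; by_cases hli : l = i <;> simp [hli, hm1]
      simp only [lhs1, rhs1] at key
      rw [key, Finset.prod_ite_eq']; simp
    · have key := H (fun l y => (if l = i then f y else 1) * (if l = j then f y else 1))
      have lhs1 : ∀ a, (∏ l, (if l = i then f (proj l a) else 1) * (if l = j then f (proj l a) else 1))
          = f (proj i a) * f (proj j a) := by
        intro a
        rw [Finset.prod_mul_distrib, Finset.prod_ite_eq', Finset.prod_ite_eq']
        simp
      have rhs1 : ∀ l : Fin k, (∑ y, m y * ((if l = i then f y else 1) * (if l = j then f y else 1)))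
          = (if l = i then (∑ y, m y * f y) else 1) * (if l = j then (∑ y, m y * f y) else 1) := by
        intro l
        by_cases hli : l = i <;> by_cases hlj : l = j
        · exact absurd (hli ▸ hlj ▸ rfl : i = j) hij
        all_goals simp [hli, hlj, hm1, hij, (show ¬ j = i from fun h => hij h.symm)]
      simp only [lhs1, rhs1] at key
      rw [key, Finset.prod_mul_distrib, Finset.prod_ite_eq', Finset.prod_ite_eq']
      simp [hij, sq]
  -- expand the square
  have expand : ∀ a, μ a * (∑ i, f (proj i a) - b)^2
      = μ a * ((∑ i, f (proj i a)) * (∑ j, f (proj j a)))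
        - 2*b*(μ a * (∑ i, f (proj i a))) + b^2 * μ a := by
    intro a; ring
  simp only [expand]
  rw [Finset.sum_add_distrib, Finset.sum_sub_distrib, ← Finset.mul_sum, ← Finset.mul_sum, h0]
  have hB : ∑ a, μ a * (∑ i, f (proj i a)) = k * (∑ y, m y * f y) := by
    calc ∑ a, μ a * (∑ i, f (proj i a)) = ∑ a, ∑ i, μ a * f (proj i a) := by
          simp only [Finset.mul_sum]
      _ = ∑ i, ∑ a, μ a * f (proj i a) := Finset.sum_comm
      _ = ∑ i : Fin k, ∑ y, m y * f y := Finset.sum_congr rfl (fun i _ => h1 i)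
      _ = k * (∑ y, m y * f y) := by
          rw [Finset.sum_const, Finset.card_univ, Fintype.card_fin, nsmul_eq_mul]
  have hA : ∑ a, μ a * ((∑ i, f (proj i a)) * (∑ j, f (proj j a)))
      = k * (∑ y, m y * f y^2) + ((k:ℝ)^2 - k) * (∑ y, m y * f y)^2 := by
    calc ∑ a, μ a * ((∑ i, f (proj i a)) * (∑ j, f (proj j a)))
        = ∑ a, ∑ i, ∑ j, μ a * (f (proj i a) * f (proj j a)) := by
          apply Finset.sum_congr rfl; intro a _
          rw [Finset.sum_mul_sum]
          simp only [Finset.mul_sum]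
      _ = ∑ i, ∑ j, ∑ a, μ a * (f (proj i a) * f (proj j a)) := by
          rw [Finset.sum_comm]
          apply Finset.sum_congr rfl; intro i _
          rw [Finset.sum_comm]
      _ = ∑ i : Fin k, ∑ j : Fin k, (if i = j then (∑ y, m y * f y^2) else (∑ y, m y * f y)^2) := by
          apply Finset.sum_congr rfl; intro i _
          apply Finset.sum_congr rfl; intro j _
          exact h2 i j
      _ = ∑ i : Fin k, ((∑ y, m y * f y^2) + ((k:ℝ) - 1) * (∑ y, m y * f y)^2) := by
          apply Finset.sum_congr rfl; intro i _
          have : ∀ j : Fin k, (if i = j then (∑ y, m y * f y^2) else (∑ y, m y * f y)^2)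
              = (∑ y, m y * f y)^2 + (if i = j then ((∑ y, m y * f y^2) - (∑ y, m y * f y)^2) else 0) := by
            intro j; by_cases hj : i = j <;> simp [hj]
          simp only [this]
          rw [Finset.sum_add_distrib, Finset.sum_const, Finset.sum_ite_eq, Finset.card_univ,
            Fintype.card_fin, nsmul_eq_mul]
          simp; ring
      _ = k * (∑ y, m y * f y^2) + ((k:ℝ)^2 - k) * (∑ y, m y * f y)^2 := by
          rw [Finset.sum_const, Finset.card_univ, Fintype.card_fin, nsmul_eq_mul]
          ring
  rw [hA, hB]
  ring

lemma exists_good_cols {n k : ℕ} (G : Matrix (Fin k) (Fin n) (ZMod 2)) (hrank : G.rank = k) :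
    ∃ ι : Fin k → Fin n, Function.Injective ι ∧
      Function.Bijective (fun v : Fin k → ZMod 2 => fun i => Matrix.vecMul v G (ι i)) := by
  classical
  obtain ⟨b, hbsub, hbspan, hbli⟩ := exists_linearIndependent (ZMod 2) (Set.range G.transpose)
  have hspan : Submodule.span (ZMod 2) (Set.range G.transpose) = ⊤ := by
    apply Submodule.eq_top_of_finrank_eq
    rw [show Set.range G.transpose = Set.range G.col from rfl, ← Matrix.rank_eq_finrank_span_cols, hrank, Module.finrank_pi, Fintype.card_fin]
  rw [hspan] at hbspan
  have hbli' : LinearIndependent (ZMod 2) (Subtype.val : b → (Fin k → ZMod 2)) := hbli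
  let B : Module.Basis b (ZMod 2) (Fin k → ZMod 2) :=
    Module.Basis.mk hbli' (by rw [Subtype.range_val, hbspan])
  haveI : Fintype b := FiniteDimensional.fintypeBasisIndex B
  have hcard : Fintype.card b = k := by
    have := Module.finrank_eq_card_basis B
    rw [Module.finrank_pi, Fintype.card_fin] at this
    exact this.symm
  let e : Fin k ≃ b := (Fintype.equivFinOfCardEq hcard).symm
  have hτ : ∀ x : b, ∃ t : Fin n, G.transpose t = (x : Fin k → ZMod 2) := fun x => hbsub x.2
  choose τ hτ using hτ
  refine ⟨fun i => τ (e i), ?_, ?_⟩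
  · intro i j hij
    have h1 : ((e i : b) : Fin k → ZMod 2) = ((e j : b) : Fin k → ZMod 2) := by
      rw [← hτ (e i), ← hτ (e j)]; exact congrArg G.transpose hij
    exact e.injective (Subtype.ext h1)
  · rw [← Finite.injective_iff_bijective]
    intro v₁ v₂ hv
    have hsub : ∀ i : Fin k, Matrix.vecMul (v₁ - v₂) G (τ (e i)) = 0 := by
      intro i
      rw [Matrix.sub_vecMul]
      have := congrFun hv i
      simp only [Pi.sub_apply, this, sub_self]
    set v := v₁ - v₂ with hvdef
    have hdot : ∀ x ∈ b, dotProduct v x = 0 := by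
      intro x hx
      have hi : (e (e.symm ⟨x, hx⟩) : b) = ⟨x, hx⟩ := e.apply_symm_apply _
      have := hsub (e.symm ⟨x, hx⟩)
      rw [show Matrix.vecMul v G (τ (e (e.symm ⟨x, hx⟩)))
            = dotProduct v (G.transpose (τ (e (e.symm ⟨x, hx⟩)))) from rfl] at this
      rw [hτ, hi] at this
      exact this
    have hall : ∀ w : Fin k → ZMod 2, dotProduct v w = 0 := by
      intro w
      have hw : w ∈ Submodule.span (ZMod 2) b := by rw [hbspan]; trivial
      induction hw using Submodule.span_induction with
      | mem x hx => exact hdot x hx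
      | zero => simp
      | add x y _ _ hx hy => rw [dotProduct_add, hx, hy, add_zero]
      | smul a x _ hx => rw [dotProduct_smul, hx, smul_zero]
    have hv0 : v = 0 := by
      funext j
      have := hall (Pi.single j 1)
      rwa [dotProduct_single, mul_one] at this
    exact sub_eq_zero.mp (hvdef ▸ hv0)

lemma hatQ_exp {𝒵 : Type} [Fintype 𝒵] [DecidableEq 𝒵] {n k : ℕ}
    (W : Bool → 𝒵 → ℝ) (hWsum : ∀ x, ∑ y, W x y = 1)
    (G : Matrix (Fin k) (Fin n) (ZMod 2))
    (ι : Fin k → Fin n) (hι : Function.Injective ι)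
    (hbij : Function.Bijective (fun v : Fin k → ZMod 2 => fun i => Matrix.vecMul v G (ι i)))
    (h : Fin k → 𝒵 → ℝ) :
    ∑ z : Fin n → 𝒵, (((2:ℝ)^k)⁻¹ * ∑ v : Fin k → ZMod 2,
        ∏ t, W (if Matrix.vecMul v G t = 1 then true else false) (z t)) * (∏ i, h i (z (ι i)))
      = ∏ i, ∑ y, ((W false y + W true y)/2) * h i y := by
  classical
  set ψ : Fin k → ZMod 2 → ℝ := fun i c => ∑ y, W (if c = 1 then true else false) y * h i y
    with hψ
  have step1 : ∑ z : Fin n → 𝒵, (((2:ℝ)^k)⁻¹ * ∑ v : Fin k → ZMod 2,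
        ∏ t, W (if Matrix.vecMul v G t = 1 then true else false) (z t)) * (∏ i, h i (z (ι i)))
      = ((2:ℝ)^k)⁻¹ * ∑ v : Fin k → ZMod 2, ∑ z : Fin n → 𝒵,
          (∏ t, W (if Matrix.vecMul v G t = 1 then true else false) (z t)) * (∏ i, h i (z (ι i))) := by
    calc ∑ z : Fin n → 𝒵, (((2:ℝ)^k)⁻¹ * ∑ v : Fin k → ZMod 2,
        ∏ t, W (if Matrix.vecMul v G t = 1 then true else false) (z t)) * (∏ i, h i (z (ι i)))
        = ∑ z : Fin n → 𝒵, ∑ v : Fin k → ZMod 2, ((2:ℝ)^k)⁻¹ *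
            ((∏ t, W (if Matrix.vecMul v G t = 1 then true else false) (z t)) * (∏ i, h i (z (ι i)))) := by
          apply Finset.sum_congr rfl; intro z _
          rw [mul_assoc, Finset.sum_mul, Finset.mul_sum]
      _ = ∑ v : Fin k → ZMod 2, ∑ z : Fin n → 𝒵, ((2:ℝ)^k)⁻¹ *
            ((∏ t, W (if Matrix.vecMul v G t = 1 then true else false) (z t)) * (∏ i, h i (z (ι i)))) :=
          Finset.sum_comm
      _ = ((2:ℝ)^k)⁻¹ * ∑ v : Fin k → ZMod 2, ∑ z : Fin n → 𝒵,
          (∏ t, W (if Matrix.vecMul v G t = 1 then true else false) (z t)) * (∏ i, h i (z (ι i))) := by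
          rw [Finset.mul_sum]
          apply Finset.sum_congr rfl; intro v _
          rw [Finset.mul_sum]
  rw [step1]
  have step2 : ∀ v : Fin k → ZMod 2, ∑ z : Fin n → 𝒵,
        (∏ t, W (if Matrix.vecMul v G t = 1 then true else false) (z t)) * (∏ i, h i (z (ι i)))
      = ∏ i, ψ i (Matrix.vecMul v G (ι i)) := by
    intro v
    exact prod_exp (fun t => W (if Matrix.vecMul v G t = 1 then true else false))
      (fun t => hWsum _) ι hι h
  rw [Finset.sum_congr rfl (fun v _ => step2 v)]
  have step3 : ∑ v : Fin k → ZMod 2, ∏ i, ψ i (Matrix.vecMul v G (ι i))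
      = ∑ u : Fin k → ZMod 2, ∏ i, ψ i (u i) :=
    hbij.sum_comp (fun u => ∏ i, ψ i (u i))
  rw [step3, sum_pi_prod ψ]
  have step4 : ((2:ℝ)^k)⁻¹ = ∏ _i : Fin k, (2:ℝ)⁻¹ := by
    rw [Finset.prod_const, Finset.card_univ, Fintype.card_fin, inv_pow]
  rw [step4, ← Finset.prod_mul_distrib]
  apply Finset.prod_congr rfl
  intro i _
  have hsum2 : ∑ c : ZMod 2, ψ i c = ψ i 0 + ψ i 1 := by
    rw [show (Finset.univ : Finset (ZMod 2)) = {0,1} by decide]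
    simp
  rw [hsum2]
  have e0 : ψ i 0 = ∑ y, W false y * h i y := by simp [hψ]
  have e1 : ψ i 1 = ∑ y, W true y * h i y := by simp [hψ]
  rw [e0, e1, ← Finset.sum_add_distrib, Finset.mul_sum]
  exact Finset.sum_congr rfl fun y _ => by ring

open Finset in
/-- Proposition 1: for any `(n,k)` binary linear code of rank `k` used with uniform
messages over a BI-DMC, there is a hypothesis test with false-alarm probability at most
`16/(k χ₂(Q1‖Q0))` and missed-detection probability at most
`(1/k)(16/χ₂ + 8χ₃/χ₂² − 4)`. -/
theorem stmt0 {𝒵 : Type} [Fintype 𝒵] [DecidableEq 𝒵]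
    (W : Bool → 𝒵 → ℝ) (hW : ∀ x, IsPMF (W x))
    (hQ0pos : ∀ z, 0 < W false z) (hneq : W true ≠ W false)
    (n k : ℕ) (hk1 : 1 ≤ k) (hkn : k ≤ n)
    (G : Matrix (Fin k) (Fin n) (ZMod 2)) (hrank : G.rank = k) :
    ∃ A : Finset (Fin n → 𝒵),
      (∑ z ∈ A, prodCh W n z (fun _ => false))
          ≤ 16 / (k * chiDiv 2 (W true) (W false)) ∧
      (∑ z ∈ Aᶜ, ((2:ℝ)^k)⁻¹ * ∑ v : Fin k → ZMod 2,
          prodCh W n z (fun t => if Matrix.vecMul v G t = 1 then true else false))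
        ≤ (1/(k:ℝ)) * (16 / chiDiv 2 (W true) (W false)
            + 8 * chiDiv 3 (W true) (W false) / (chiDiv 2 (W true) (W false))^2 - 4) := by
  classical
  obtain ⟨ι, hι, hbij⟩ := exists_good_cols G hrank
  have hsum : ∀ x, ∑ y, W x y = 1 := fun x => (hW x).2
  have hWnn : ∀ x y, 0 ≤ W x y := fun x => (hW x).1
  have hQ0ne : ∀ y, W false y ≠ 0 := fun y => (hQ0pos y).ne'
  set c := chiDiv 2 (W true) (W false) with hcdef
  set χ3 := chiDiv 3 (W true) (W false) with hχdef
  set f : 𝒵 → ℝ := fun y => (W true y - W false y) / W false y with hfdef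
  have hc' : c = ∑ y, (W true y - W false y)^2 / (W false y) := by
    rw [hcdef]; unfold chiDiv; norm_num
  have hχ' : χ3 = ∑ y, (W true y - W false y)^3 / (W false y)^2 := by
    rw [hχdef]; unfold chiDiv; norm_num
  have hc0 : 0 < c := by
    rw [hc']
    obtain ⟨z₀, hz₀⟩ := Function.ne_iff.mp hneq
    apply Finset.sum_pos'
    · intro y _; exact div_nonneg (sq_nonneg _) (hQ0pos y).le
    · refine ⟨z₀, Finset.mem_univ z₀, div_pos ?_ (hQ0pos z₀)⟩
      have hne : W true z₀ - W false z₀ ≠ 0 := sub_ne_zero.mpr hz₀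
      positivity
  have hk0 : (0:ℝ) < k := by exact_mod_cast Nat.lt_of_lt_of_le Nat.zero_lt_one hk1
  -- per-letter moment identities
  have hs1 : ∑ y, W false y * f y = 0 := by
    calc ∑ y, W false y * f y = ∑ y, (W true y - W false y) := by
          apply Finset.sum_congr rfl; intro y _
          have hy : W false y ≠ 0 := hQ0ne y
          rw [hfdef]; field_simp
      _ = 0 := by rw [Finset.sum_sub_distrib, hsum, hsum, sub_self]
  have hs2 : ∑ y, W false y * f y ^ 2 = c := by
    rw [hc']
    apply Finset.sum_congr rfl; intro y _
    have hy : W false y ≠ 0 := hQ0ne y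
    rw [hfdef]; field_simp
  have hm1 : ∑ y, (W false y + W true y)/2 = 1 := by
    rw [← Finset.sum_div, Finset.sum_add_distrib, hsum, hsum]; norm_num
  have hsM1 : ∑ y, ((W false y + W true y)/2) * f y = c/2 := by
    calc ∑ y, ((W false y + W true y)/2) * f y
        = ∑ y, ((W true y - W false y)^2 / (W false y) / 2 + (W true y - W false y)) := by
          apply Finset.sum_congr rfl; intro y _
          have hy : W false y ≠ 0 := hQ0ne y
          rw [hfdef]; field_simp; ring
      _ = c/2 := by
          rw [Finset.sum_add_distrib, Finset.sum_sub_distrib, hsum, hsum, sub_self, add_zero,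
            ← Finset.sum_div, ← hc']
  have hsM2 : ∑ y, ((W false y + W true y)/2) * f y ^ 2 = c + χ3/2 := by
    calc ∑ y, ((W false y + W true y)/2) * f y ^ 2
        = ∑ y, ((W true y - W false y)^2 / (W false y)
            + (W true y - W false y)^3 / (W false y)^2 / 2) := by
          apply Finset.sum_congr rfl; intro y _
          have hy : W false y ≠ 0 := hQ0ne y
          rw [hfdef]; field_simp; ring
      _ = c + χ3/2 := by
          rw [Finset.sum_add_distrib, ← Finset.sum_div, ← hc', ← hχ']
  -- the statistic and the test
  set S : (Fin n → 𝒵) → ℝ := fun z => ∑ i, f (z (ι i)) with hSdef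
  set θ : ℝ := k * c / 4 with hθdef
  have hθ0 : 0 < θ := by rw [hθdef]; positivity
  refine ⟨univ.filter (fun z => θ ≤ S z), ?_, ?_⟩
  · -- false alarm
    have H1 := fun h => prod_exp (fun _ => W false) (fun _ => hsum false) ι hι h
    have key1 : ∑ z : Fin n → 𝒵, (∏ t, W false (z t)) * (S z - 0)^2 = k * c := by
      rw [hSdef]
      rw [moments k (fun z : Fin n → 𝒵 => ∏ t, W false (z t)) (fun i z => z (ι i))
        (fun y => W false y) (hsum false) H1 f 0]
      rw [hs1, hs2]; ring
    have hpnn : ∀ z : Fin n → 𝒵, 0 ≤ ∏ t, W false (z t) :=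
      fun z => Finset.prod_nonneg fun t _ => (hQ0pos _).le
    calc ∑ z ∈ univ.filter (fun z => θ ≤ S z), prodCh W n z (fun _ => false)
        ≤ ∑ z ∈ univ.filter (fun z => θ ≤ S z),
            (∏ t, W false (z t)) * ((S z - 0)/θ)^2 := by
          apply Finset.sum_le_sum
          intro z hz
          rw [Finset.mem_filter] at hz
          have h1q : 1 ≤ (S z - 0)/θ := by
            rw [sub_zero, le_div_iff₀ hθ0, one_mul]; exact hz.2
          have h2q : 1 ≤ ((S z - 0)/θ)^2 := by nlinarith
          have : prodCh W n z (fun _ => false) = ∏ t, W false (z t) := rfl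
          rw [this]
          exact le_mul_of_one_le_right (hpnn z) h2q
      _ ≤ ∑ z : Fin n → 𝒵, (∏ t, W false (z t)) * ((S z - 0)/θ)^2 := by
          apply Finset.sum_le_sum_of_subset_of_nonneg (Finset.subset_univ _)
          intro z _ _
          exact mul_nonneg (hpnn z) (sq_nonneg _)
      _ = (∑ z : Fin n → 𝒵, (∏ t, W false (z t)) * (S z - 0)^2) / θ^2 := by
          rw [Finset.sum_div]
          apply Finset.sum_congr rfl; intro z _
          rw [div_pow, mul_div_assoc]
      _ = (k * c) / θ^2 := by rw [key1]
      _ = 16 / (k * c) := by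
          rw [hθdef, div_eq_div_iff (by positivity) (by positivity)]; ring
  · -- missed detection
    have H2 := hatQ_exp W hsum G ι hι hbij
    set μ2 : (Fin n → 𝒵) → ℝ := fun z => ((2:ℝ)^k)⁻¹ * ∑ v : Fin k → ZMod 2,
        ∏ t, W (if Matrix.vecMul v G t = 1 then true else false) (z t) with hμ2def
    have hμ2nn : ∀ z, 0 ≤ μ2 z := by
      intro z
      apply mul_nonneg (by positivity)
      apply Finset.sum_nonneg
      intro v _
      exact Finset.prod_nonneg fun t _ => hWnn _ _
    have key2 : ∑ z : Fin n → 𝒵, μ2 z * (S z - k * c / 2)^2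
        = k * c + k * χ3 / 2 - k * c^2 / 4 := by
      rw [hSdef]
      rw [moments k μ2 (fun i z => z (ι i)) (fun y => (W false y + W true y)/2) hm1 H2 f
        (k * c / 2)]
      rw [hsM1, hsM2]; ring
    have hgoal : ∀ z : Fin n → 𝒵, (((2:ℝ)^k)⁻¹ * ∑ v : Fin k → ZMod 2,
        prodCh W n z (fun t => if Matrix.vecMul v G t = 1 then true else false)) = μ2 z :=
      fun z => rfl
    calc ∑ z ∈ (univ.filter (fun z => θ ≤ S z))ᶜ, ((2:ℝ)^k)⁻¹ * ∑ v : Fin k → ZMod 2,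
          prodCh W n z (fun t => if Matrix.vecMul v G t = 1 then true else false)
        = ∑ z ∈ (univ.filter (fun z => θ ≤ S z))ᶜ, μ2 z := by
          apply Finset.sum_congr rfl; intro z _; exact hgoal z
      _ ≤ ∑ z ∈ (univ.filter (fun z => θ ≤ S z))ᶜ, μ2 z * ((S z - k * c / 2)/θ)^2 := by
          apply Finset.sum_le_sum
          intro z hz
          rw [Finset.mem_compl, Finset.mem_filter] at hz
          have hzS : S z < θ := by
            by_contra h
            exact hz ⟨Finset.mem_univ z, le_of_not_gt h⟩
          have hbS : θ ≤ (k * c / 2 - S z) := by rw [hθdef] at hzS ⊢; linarith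
          have h1q : 1 ≤ (k * c / 2 - S z)/θ := by
            rw [le_div_iff₀ hθ0, one_mul]; exact hbS
          have h2q : 1 ≤ ((S z - k * c / 2)/θ)^2 := by
            have : ((S z - k * c / 2)/θ)^2 = ((k * c / 2 - S z)/θ)^2 := by ring
            rw [this]; nlinarith
          exact le_mul_of_one_le_right (hμ2nn z) h2q
      _ ≤ ∑ z : Fin n → 𝒵, μ2 z * ((S z - k * c / 2)/θ)^2 := by
          apply Finset.sum_le_sum_of_subset_of_nonneg (Finset.subset_univ _)
          intro z _ _
          exact mul_nonneg (hμ2nn z) (sq_nonneg _)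
      _ = (∑ z : Fin n → 𝒵, μ2 z * (S z - k * c / 2)^2) / θ^2 := by
          rw [Finset.sum_div]
          apply Finset.sum_congr rfl; intro z _
          rw [div_pow]; ring
      _ = (k * c + k * χ3 / 2 - k * c^2 / 4) / θ^2 := by rw [key2]
      _ = (1/(k:ℝ)) * (16 / c + 8 * χ3 / c^2 - 4) := by
          rw [hθdef]
          field_simp
          ring
end

section
/- Let W be a binary-input discrete memoryless channel with finite output alphabet 𝒵, with Q_0 = W(·|0) everywhere positive and Q_1 = W(·|1) ≠ Q_0. For each n ∈ ℕ* let G_n ∈ F_2^{k_n×n} have rank k_n with 1 ≤ k_n ≤ n, and let Q̂^n(z) = 2^{−k_n} Σ_{v∈F_2^{k_n}} W^{⊗n}(z | vG_n). If k_n → ∞ as n → ∞, then there exist sets A_n ⊆ 𝒵^n such that lim_{n→∞} Q_0^{⊗n}(A_n) = 0 and lim_{n→∞} Q̂^n(𝒵^n ∖ A_n) = 0; i.e., a family of (n,k_n) linear codes with k_n → ∞ used with uniform messages cannot be covert. -/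
open Finset

section AuxCovert
open Matrix

section helpers
variable {𝒵 : Type} [Fintype 𝒵] {ι : Type} [Fintype ι] [DecidableEq ι]

lemma prim (F : ι → 𝒵 → ℝ) :
    ∑ z : ι → 𝒵, ∏ t, F t (z t) = ∏ t, ∑ x, F t x := by
  rw [Finset.prod_univ_sum, Fintype.piFinset_univ]

lemma ind_sum {𝒵 : Type} [Fintype 𝒵] [DecidableEq 𝒵] (Q : 𝒵 → ℝ) (z0 : 𝒵) :
    ∑ x, Q x * (if x = z0 then (1:ℝ) else 0) = Q z0 := by
  have h : ∀ x, Q x * (if x = z0 then (1:ℝ) else 0) = if x = z0 then Q x else 0 := by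
    intro x; by_cases h : x = z0 <;> simp [h]
  simp_rw [h]
  rw [Finset.sum_ite_eq' Finset.univ z0 Q]
  simp
end helpers


section helpers
variable {𝒵 : Type} [Fintype 𝒵] {ι : Type} [Fintype ι] [DecidableEq ι]

lemma E1 (P : ι → 𝒵 → ℝ) (h1 : ∀ t, ∑ x, P t x = 1) (g : 𝒵 → ℝ) (s : ι) :
    ∑ z : ι → 𝒵, (∏ t, P t (z t)) * g (z s) = ∑ x, P s x * g x := by
  have key : ∀ z : ι → 𝒵, (∏ t, P t (z t)) * g (z s)
      = ∏ t, (P t (z t) * (if t = s then g (z t) else 1)) := by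
    intro z
    rw [Finset.prod_mul_distrib, Finset.prod_ite_eq' Finset.univ s (fun t => g (z t))]
    simp
  simp_rw [key]
  rw [prim (fun t x => P t x * (if t = s then g x else 1))]
  have h2 : ∀ t, (∑ x, P t x * (if t = s then g x else 1))
      = if t = s then (∑ x, P s x * g x) else 1 := by
    intro t; by_cases h : t = s <;> simp [h, h1 t]
  simp_rw [h2]
  rw [Finset.prod_ite_eq' Finset.univ s (fun _ => ∑ x, P s x * g x)]
  simp

lemma E2 (P : ι → 𝒵 → ℝ) (h1 : ∀ t, ∑ x, P t x = 1) (g : 𝒵 → ℝ) (s t : ι) (hst : s ≠ t) :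
    ∑ z : ι → 𝒵, (∏ u, P u (z u)) * (g (z s) * g (z t))
      = (∑ x, P s x * g x) * (∑ x, P t x * g x) := by
  have key : ∀ z : ι → 𝒵, (∏ u, P u (z u)) * (g (z s) * g (z t))
      = ∏ u, (P u (z u) * ((if u = s then g (z u) else 1) * (if u = t then g (z u) else 1))) := by
    intro z
    rw [Finset.prod_mul_distrib, Finset.prod_mul_distrib,
      Finset.prod_ite_eq' Finset.univ s (fun u => g (z u)),
      Finset.prod_ite_eq' Finset.univ t (fun u => g (z u))]
    simp
  simp_rw [key]
  rw [prim (fun u x => P u x * ((if u = s then g x else 1) * (if u = t then g x else 1)))]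
  have h2 : ∀ u, (∑ x, P u x * ((if u = s then g x else 1) * (if u = t then g x else 1)))
      = (if u = s then (∑ x, P s x * g x) else 1) * (if u = t then (∑ x, P t x * g x) else 1) := by
    intro u
    by_cases hs : u = s
    · subst hs; simp [hst, h1]
    · by_cases ht : u = t
      · subst ht; simp [hs, h1]
      · simp [hs, ht, h1 u]
  simp_rw [h2]
  rw [Finset.prod_mul_distrib,
    Finset.prod_ite_eq' Finset.univ s (fun _ => ∑ x, P s x * g x),
    Finset.prod_ite_eq' Finset.univ t (fun _ => ∑ x, P t x * g x)]
  simp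

end helpers

variable {𝒵 : Type} [Fintype 𝒵] {ι : Type} [Fintype ι] [DecidableEq ι]

lemma cheby (μ : (ι → 𝒵) → ℝ) (hμ0 : ∀ z, 0 ≤ μ z) (hμ1 : ∑ z, μ z = 1)
    (g : 𝒵 → ℝ) (hg : ∀ x, g x * g x = g x)
    (S : Finset ι) (q : ℝ) (hq0 : 0 ≤ q) (hq1 : q ≤ 1)
    (hE1 : ∀ s ∈ S, ∑ z : ι → 𝒵, μ z * g (z s) = q)
    (hE2 : ∀ s ∈ S, ∀ t ∈ S, s ≠ t → ∑ z : ι → 𝒵, μ z * (g (z s) * g (z t)) = q * q)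
    (B : Finset (ι → 𝒵)) (ε' : ℝ) (hε' : 0 < ε')
    (hB : ∀ z ∈ B, ε' ≤ |(∑ t ∈ S, g (z t)) - S.card * q|) :
    ∑ z ∈ B, μ z ≤ S.card / ε' ^ 2 := by
  set c : (ι → 𝒵) → ℝ := fun z => ∑ t ∈ S, g (z t) with hc
  set m : ℝ := S.card * q with hm
  -- first moment
  have hEc : ∑ z : ι → 𝒵, μ z * c z = m := by
    have h0 : ∀ z : ι → 𝒵, μ z * c z = ∑ t ∈ S, μ z * g (z t) := by
      intro z; exact Finset.mul_sum _ _ _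
    simp_rw [h0]
    rw [Finset.sum_comm, Finset.sum_congr rfl hE1]
    simp [hm, mul_comm]
  -- second moment
  have hEc2 : ∑ z : ι → 𝒵, μ z * (c z * c z)
      = S.card * q + (S.card * S.card - S.card) * (q * q) := by
    have expand : ∀ z : ι → 𝒵, μ z * (c z * c z)
        = ∑ s ∈ S, ∑ t ∈ S, μ z * (g (z s) * g (z t)) := by
      intro z
      rw [hc]; rw [Finset.sum_mul_sum, Finset.mul_sum]
      exact Finset.sum_congr rfl fun s _ => Finset.mul_sum _ _ _
    simp_rw [expand]
    rw [Finset.sum_comm]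
    have swap2 : ∀ s ∈ S, (∑ z : ι → 𝒵, ∑ t ∈ S, μ z * (g (z s) * g (z t)))
        = ∑ t ∈ S, ∑ z : ι → 𝒵, μ z * (g (z s) * g (z t)) := fun s _ => Finset.sum_comm
    rw [Finset.sum_congr rfl swap2]
    have val : ∀ s ∈ S, ∀ t ∈ S, (∑ z : ι → 𝒵, μ z * (g (z s) * g (z t)))
        = if s = t then q else q * q := by
      intro s hs t ht
      by_cases h : s = t
      · subst h
        simp only [if_pos rfl]
        have : ∀ z : ι → 𝒵, μ z * (g (z s) * g (z s)) = μ z * g (z s) := by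
          intro z; rw [hg]
        simp_rw [this]; exact hE1 s hs
      · rw [if_neg h]; exact hE2 s hs t ht h
    have step : ∀ s ∈ S, (∑ t ∈ S, ∑ z : ι → 𝒵, μ z * (g (z s) * g (z t)))
        = S.card * (q * q) + (q - q * q) := by
      intro s hs
      rw [Finset.sum_congr rfl (val s hs)]
      have : ∀ t ∈ S, (if s = t then q else q * q) = q * q + (if s = t then q - q * q else 0) := by
        intro t _; by_cases h : s = t <;> simp [h]
      rw [Finset.sum_congr rfl this, Finset.sum_add_distrib, Finset.sum_const,
        Finset.sum_ite_eq S s (fun _ => q - q * q), if_pos hs]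
      push_cast; ring
    rw [Finset.sum_congr rfl step, Finset.sum_const]
    push_cast; ring
  -- Chebyshev
  have key : ∑ z ∈ B, μ z ≤ (∑ z : ι → 𝒵, μ z * (c z - m) ^ 2) / ε' ^ 2 := by
    have h1 : ∀ z ∈ B, μ z ≤ (ε' ^ 2)⁻¹ * (μ z * (c z - m) ^ 2) := by
      intro z hz
      have habs : ε' ≤ |c z - m| := hB z hz
      have h2 : ε' ^ 2 ≤ (c z - m) ^ 2 := by
        calc ε' ^ 2 = ε' * ε' := sq ε'
          _ ≤ |c z - m| * |c z - m| :=
              mul_le_mul habs habs (le_of_lt hε') (abs_nonneg _)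
          _ = (c z - m) ^ 2 := by rw [← abs_mul, ← sq, abs_sq]
      calc μ z = (ε' ^ 2)⁻¹ * (ε' ^ 2 * μ z) := by
            field_simp
        _ ≤ (ε' ^ 2)⁻¹ * (μ z * (c z - m) ^ 2) := by
            apply mul_le_mul_of_nonneg_left _ (by positivity)
            rw [mul_comm (μ z)]
            exact mul_le_mul_of_nonneg_right h2 (hμ0 z)
    calc ∑ z ∈ B, μ z ≤ ∑ z ∈ B, (ε' ^ 2)⁻¹ * (μ z * (c z - m) ^ 2) :=
          Finset.sum_le_sum h1
      _ ≤ ∑ z : ι → 𝒵, (ε' ^ 2)⁻¹ * (μ z * (c z - m) ^ 2) := by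
          apply Finset.sum_le_sum_of_subset_of_nonneg (Finset.subset_univ B)
          intro z _ _
          exact mul_nonneg (by positivity) (mul_nonneg (hμ0 z) (sq_nonneg _))
      _ = (∑ z : ι → 𝒵, μ z * (c z - m) ^ 2) / ε' ^ 2 := by
          rw [div_eq_inv_mul, ← Finset.mul_sum]
  have var : ∑ z : ι → 𝒵, μ z * (c z - m) ^ 2 = S.card * (q * (1 - q)) := by
    have expand : ∀ z : ι → 𝒵, μ z * (c z - m) ^ 2
        = μ z * (c z * c z) - 2 * m * (μ z * c z) + m * m * μ z := by
      intro z; ring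
    simp_rw [expand]
    rw [Finset.sum_add_distrib, Finset.sum_sub_distrib, ← Finset.mul_sum, ← Finset.mul_sum,
      hEc, hEc2, hμ1, hm]
    ring
  have hqq : q * (1 - q) ≤ 1 := by nlinarith
  calc ∑ z ∈ B, μ z ≤ (∑ z : ι → 𝒵, μ z * (c z - m) ^ 2) / ε' ^ 2 := key
    _ = (S.card * (q * (1 - q))) / ε' ^ 2 := by rw [var]
    _ ≤ S.card / ε' ^ 2 := by
        apply div_le_div_of_nonneg_right _ (by positivity)
        have hc0 : (0:ℝ) ≤ S.card := Nat.cast_nonneg _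
        nlinarith


lemma exists_infoset {κ n : ℕ} (hn : 0 < n) (G : Matrix (Fin κ) (Fin n) (ZMod 2))
    (hrank : G.rank = κ) :
    ∃ S : Finset (Fin n), S.card = κ ∧
      Function.Bijective (fun (v : Fin κ → ZMod 2) =>
        (fun t : {x // x ∈ S} => Matrix.vecMul v G t.1)) := by
  classical
  haveI : Fact (Nat.Prime 2) := ⟨Nat.prime_two⟩
  have hspan : Submodule.span (ZMod 2) (Set.range Gᵀ) = ⊤ := by
    apply Submodule.eq_top_of_finrank_eq
    rw [show Set.range Gᵀ = Set.range G.col from rfl, ← Matrix.rank_eq_finrank_span_cols, hrank]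
    rw [Module.finrank_pi, Fintype.card_fin]
  obtain ⟨b, hb_sub, hb_span, hb_li⟩ := exists_linearIndependent (ZMod 2) (Set.range Gᵀ)
  haveI : Fintype b := ((Set.finite_range Gᵀ).subset hb_sub).fintype
  have hb_top : Submodule.span (ZMod 2) b = ⊤ := hb_span.trans hspan
  have hb_card : b.toFinset.card = κ := by
    have h1 := finrank_span_set_eq_card hb_li
    rw [hb_top, finrank_top, Module.finrank_pi, Fintype.card_fin] at h1
    exact h1.symm
  set σ : (Fin κ → ZMod 2) → Fin n := fun x =>
    if h : ∃ j, Gᵀ j = x then h.choose else ⟨0, hn⟩ with hσ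
  have hσ_spec : ∀ x ∈ b, Gᵀ (σ x) = x := by
    intro x hx
    obtain ⟨j, hj⟩ := hb_sub hx
    rw [hσ]; simp only
    rw [dif_pos ⟨j, hj⟩]
    exact (⟨j, hj⟩ : ∃ j, Gᵀ j = x).choose_spec
  set S : Finset (Fin n) := b.toFinset.image σ with hS
  have hcard : S.card = κ := by
    rw [hS, Finset.card_image_of_injOn, hb_card]
    intro x hx y hy hxy
    simp only [Finset.mem_coe, Set.mem_toFinset] at hx hy
    rw [← hσ_spec x hx, ← hσ_spec y hy, hxy]
  refine ⟨S, hcard, ?_⟩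
  have hspanS : Submodule.span (ZMod 2) (Gᵀ '' (S : Set (Fin n))) = ⊤ := by
    refine le_antisymm le_top ?_
    rw [← hb_top]
    apply Submodule.span_mono
    intro x hx
    refine ⟨σ x, ?_, hσ_spec x hx⟩
    rw [hS]; simp only [Finset.coe_image, Set.mem_image]
    exact ⟨x, Set.mem_toFinset.mpr hx, rfl⟩
  rw [Fintype.bijective_iff_injective_and_card]
  constructor
  · intro v w hvw
    have hd : ∀ y : Fin κ → ZMod 2, dotProduct (v - w) y = 0 := by
      let ℓ : (Fin κ → ZMod 2) →ₗ[ZMod 2] ZMod 2 :=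
        { toFun := fun y => dotProduct (v - w) y,
          map_add' := fun y z => by simp [dotProduct_add],
          map_smul' := fun c y => by simp [dotProduct_smul] }
      have hℓ : ℓ = (0 : (Fin κ → ZMod 2) →ₗ[ZMod 2] ZMod 2) := by
        apply LinearMap.ext_on hspanS
        rintro x ⟨t, ht, rfl⟩
        have h1 : Matrix.vecMul v G t = Matrix.vecMul w G t := by
          have := congrFun hvw ⟨t, ht⟩
          exact this
        show dotProduct (v - w) (Gᵀ t) = 0
        have h2 : dotProduct (v - w) (Gᵀ t) = Matrix.vecMul (v - w) G t := by
          rfl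
        rw [h2, Matrix.sub_vecMul]
        simp [Pi.sub_apply, h1]
      intro y
      exact congrFun (congrArg DFunLike.coe hℓ) y
    have : v - w = 0 := by
      funext i
      have := hd (Pi.single i 1)
      rwa [dotProduct_single, mul_one] at this
    exact sub_eq_zero.mp this
  · rw [Fintype.card_fun, Fintype.card_fun, Fintype.card_fin, Fintype.card_coe, hcard]

lemma key_step {𝒵 : Type} [Fintype 𝒵] [DecidableEq 𝒵]
    (W : Bool → 𝒵 → ℝ) (hW : ∀ x, IsPMF (W x))
    (z0 : 𝒵) (ε : ℝ) (hε : 0 < ε)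
    (hεdef : ε = |(W false z0 + W true z0) / 2 - W false z0| / 2)
    {κ n : ℕ} (hκ : 1 ≤ κ) (hn : 1 ≤ n)
    (G : Matrix (Fin κ) (Fin n) (ZMod 2)) (hrank : G.rank = κ) :
    ∃ A : Finset (Fin n → 𝒵),
      (∑ z ∈ A, prodCh W n z (fun _ => false)) ≤ (κ:ℝ) / ((κ * ε) ^ 2) ∧
      (∑ z ∈ Aᶜ, ((2:ℝ)^κ)⁻¹ * ∑ v : Fin κ → ZMod 2,
        prodCh W n z (fun t => if Matrix.vecMul v G t = 1 then true else false))
        ≤ (κ:ℝ) / ((κ * ε) ^ 2) := by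
  classical
  obtain ⟨S, hScard, hSbij⟩ := exists_infoset hn G hrank
  have hSc : (S.card : ℝ) = κ := by rw [hScard]
  set p : ℝ := W false z0 with hp
  set r : ℝ := (W false z0 + W true z0) / 2 with hr
  have hp0 : 0 ≤ p := (hW false).1 z0
  have hp1 : p ≤ 1 := by
    rw [hp, ← (hW false).2]
    exact Finset.single_le_sum (fun x _ => (hW false).1 x) (Finset.mem_univ z0)
  have hq0 : 0 ≤ W true z0 := (hW true).1 z0
  have hq1 : W true z0 ≤ 1 := by
    rw [← (hW true).2]
    exact Finset.single_le_sum (fun x _ => (hW true).1 x) (Finset.mem_univ z0)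
  have hr0 : 0 ≤ r := by rw [hr]; linarith
  have hr1 : r ≤ 1 := by rw [hr]; linarith
  set g : 𝒵 → ℝ := fun x => if x = z0 then 1 else 0 with hgdef
  have hg : ∀ x, g x * g x = g x := by
    intro x; by_cases h : x = z0 <;> simp [hgdef, h]
  have hκR : (0:ℝ) < κ := by exact_mod_cast hκ
  have hε' : 0 < (κ:ℝ) * ε := mul_pos hκR hε
  set A : Finset (Fin n → 𝒵) :=
    Finset.filter (fun z => (κ:ℝ) * ε ≤ |(∑ t ∈ S, g (z t)) - κ * p|) Finset.univ with hA
  refine ⟨A, ?_, ?_⟩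
  · -- false alarm: product measure under W false
    have h1 := cheby (ι := Fin n) (fun z => prodCh W n z (fun _ => false))
      (fun z => Finset.prod_nonneg fun t _ => (hW false).1 _)
      (by
        simp only [prodCh]
        rw [prim (fun _ x => W false x)]
        simp [(hW false).2])
      g hg S p hp0 hp1
      (fun s hs => by
        simp only [prodCh]
        rw [E1 (fun _ x => W false x) (fun _ => (hW false).2) g s]
        simp only [hgdef]
        exact ind_sum (W false) z0)
      (fun s hs t ht hst => by
        simp only [prodCh]
        rw [E2 (fun _ x => W false x) (fun _ => (hW false).2) g s t hst]
        simp only [hgdef]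
        rw [ind_sum (W false) z0])
      A ((κ:ℝ) * ε) hε'
      (fun z hz => by
        rw [hSc]
        exact (Finset.mem_filter.mp hz).2)
    calc (∑ z ∈ A, prodCh W n z (fun _ => false)) ≤ (S.card : ℝ) / ((κ:ℝ)*ε)^2 := h1
      _ = (κ:ℝ) / ((κ*ε)^2) := by rw [hSc]
  · -- missed detection
    set xmap : (Fin κ → ZMod 2) → (Fin n → Bool) :=
      fun v t => if Matrix.vecMul v G t = 1 then true else false with hxmap
    set μ : (Fin n → 𝒵) → ℝ :=
      fun z => ((2:ℝ)^κ)⁻¹ * ∑ v : Fin κ → ZMod 2, prodCh W n z (xmap v) with hμdef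
    set a : ZMod 2 → ℝ := fun x => W (if x = 1 then true else false) z0 with ha
    have hcard2 : Fintype.card (ZMod 2) = 2 := ZMod.card 2
    have hunivZ : (Finset.univ : Finset (ZMod 2)) = {0, 1} := by decide
    have hprodhalf : (∏ _t : {x // x ∈ S}, (2:ℝ)⁻¹) = ((2:ℝ)^κ)⁻¹ := by
      rw [Finset.prod_const, Finset.card_univ, Fintype.card_coe, hScard, inv_pow]
    have hhalfrow : ∀ t : {x // x ∈ S}, ∑ x : ZMod 2, (2:ℝ)⁻¹ = 1 := by
      intro t
      rw [Finset.sum_const, Finset.card_univ, hcard2]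
      norm_num
    have havg : ∑ x : ZMod 2, (2:ℝ)⁻¹ * a x = r := by
      rw [hunivZ, Finset.sum_insert (by decide), Finset.sum_singleton]
      have h0 : a 0 = W false z0 := by rw [ha]; norm_num
      have h1 : a 1 = W true z0 := by rw [ha]; norm_num
      rw [h0, h1, hr]; ring
    -- per-v expectations
    have hprodCh_nonneg : ∀ (z : Fin n → 𝒵) (x : Fin n → Bool), 0 ≤ prodCh W n z x :=
      fun z x => Finset.prod_nonneg fun t _ => (hW _).1 _
    have hμ0 : ∀ z, 0 ≤ μ z := by
      intro z
      exact mul_nonneg (by positivity) (Finset.sum_nonneg fun v _ => hprodCh_nonneg z _)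
    have hv1 : ∀ v, ∑ z : Fin n → 𝒵, prodCh W n z (xmap v) = 1 := by
      intro v
      simp only [prodCh]
      rw [prim (fun t x => W (xmap v t) x)]
      simp [(hW _).2]
    have hcardfun : (Fintype.card (Fin κ → ZMod 2) : ℝ) = 2^κ := by
      rw [Fintype.card_fun, hcard2, Fintype.card_fin]
      push_cast; ring
    have hμ1 : ∑ z : Fin n → 𝒵, μ z = 1 := by
      rw [hμdef]
      rw [← Finset.mul_sum, Finset.sum_comm]
      rw [Finset.sum_congr rfl (fun v _ => hv1 v), Finset.sum_const, Finset.card_univ]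
      rw [nsmul_eq_mul, mul_one, ← hcardfun]
      rw [inv_mul_cancel₀]
      rw [hcardfun]; positivity
    -- E1 for μ
    have hμE1 : ∀ s ∈ S, ∑ z : Fin n → 𝒵, μ z * g (z s) = r := by
      intro s hs
      have step0 : ∀ z, μ z * g (z s)
          = ((2:ℝ)^κ)⁻¹ * ∑ v, prodCh W n z (xmap v) * g (z s) := by
        intro z
        rw [hμdef, mul_assoc, Finset.sum_mul]
      simp_rw [step0]
      rw [← Finset.mul_sum, Finset.sum_comm]
      have perv : ∀ v : Fin κ → ZMod 2,
          ∑ z : Fin n → 𝒵, prodCh W n z (xmap v) * g (z s) = a (Matrix.vecMul v G s) := by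
        intro v
        simp only [prodCh]
        rw [E1 (fun t x => W (xmap v t) x) (fun t => (hW _).2) g s]
        simp only [hgdef]
        rw [ind_sum (W (xmap v s)) z0]
      rw [Finset.sum_congr rfl (fun v _ => perv v)]
      -- transport along bijection
      have htrans : ∑ v : Fin κ → ZMod 2, a (Matrix.vecMul v G s)
          = ∑ u : {x // x ∈ S} → ZMod 2, a (u ⟨s, hs⟩) := by
        exact Fintype.sum_bijective _ hSbij _ _ (fun v => rfl)
      rw [htrans, Finset.mul_sum]
      have step2 : ∀ u : {x // x ∈ S} → ZMod 2,
          ((2:ℝ)^κ)⁻¹ * a (u ⟨s, hs⟩) = (∏ t : {x // x ∈ S}, (2:ℝ)⁻¹) * a (u ⟨s, hs⟩) := by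
        intro u; rw [hprodhalf]
      simp_rw [step2]
      have := E1 (ι := {x // x ∈ S}) (𝒵 := ZMod 2) (fun _ x => (2:ℝ)⁻¹) hhalfrow a ⟨s, hs⟩
      rw [this, havg]
    -- E2 for μ
    have hμE2 : ∀ s ∈ S, ∀ t ∈ S, s ≠ t →
        ∑ z : Fin n → 𝒵, μ z * (g (z s) * g (z t)) = r * r := by
      intro s hs t ht hst
      have step0 : ∀ z, μ z * (g (z s) * g (z t))
          = ((2:ℝ)^κ)⁻¹ * ∑ v, prodCh W n z (xmap v) * (g (z s) * g (z t)) := by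
        intro z
        rw [hμdef, mul_assoc, Finset.sum_mul]
      simp_rw [step0]
      rw [← Finset.mul_sum, Finset.sum_comm]
      have perv : ∀ v : Fin κ → ZMod 2,
          ∑ z : Fin n → 𝒵, prodCh W n z (xmap v) * (g (z s) * g (z t))
            = a (Matrix.vecMul v G s) * a (Matrix.vecMul v G t) := by
        intro v
        simp only [prodCh]
        rw [E2 (fun t' x => W (xmap v t') x) (fun t' => (hW _).2) g s t hst]
        simp only [hgdef]
        rw [ind_sum (W (xmap v s)) z0, ind_sum (W (xmap v t)) z0]
      rw [Finset.sum_congr rfl (fun v _ => perv v)]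
      have htrans : ∑ v : Fin κ → ZMod 2, a (Matrix.vecMul v G s) * a (Matrix.vecMul v G t)
          = ∑ u : {x // x ∈ S} → ZMod 2, a (u ⟨s, hs⟩) * a (u ⟨t, ht⟩) := by
        exact Fintype.sum_bijective _ hSbij _ _ (fun v => rfl)
      rw [htrans, Finset.mul_sum]
      have step2 : ∀ u : {x // x ∈ S} → ZMod 2,
          ((2:ℝ)^κ)⁻¹ * (a (u ⟨s, hs⟩) * a (u ⟨t, ht⟩))
            = (∏ t' : {x // x ∈ S}, (2:ℝ)⁻¹) * (a (u ⟨s, hs⟩) * a (u ⟨t, ht⟩)) := by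
        intro u; rw [hprodhalf]
      simp_rw [step2]
      have hne : (⟨s, hs⟩ : {x // x ∈ S}) ≠ ⟨t, ht⟩ := by
        intro h; exact hst (congrArg Subtype.val h)
      have := E2 (ι := {x // x ∈ S}) (𝒵 := ZMod 2) (fun _ x => (2:ℝ)⁻¹) hhalfrow a
        ⟨s, hs⟩ ⟨t, ht⟩ hne
      rw [this, havg]
    -- apply chebyshev to B = Aᶜ
    have hB : ∀ z ∈ Aᶜ, (κ:ℝ) * ε ≤ |(∑ t ∈ S, g (z t)) - S.card * r| := by
      intro z hz
      rw [Finset.mem_compl, hA, Finset.mem_filter] at hz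
      push_neg at hz
      have hlt : |(∑ t ∈ S, g (z t)) - κ * p| < (κ:ℝ) * ε := hz (Finset.mem_univ z)
      have habs : |(κ:ℝ) * r - κ * p| = 2 * ((κ:ℝ) * ε) := by
        have : (κ:ℝ) * r - κ * p = κ * (r - p) := by ring
        rw [this, abs_mul, abs_of_pos hκR, hεdef]
        ring
      have htri : |(κ:ℝ) * r - κ * p| ≤ |(κ:ℝ) * r - (∑ t ∈ S, g (z t))|
          + |(∑ t ∈ S, g (z t)) - κ * p| := abs_sub_le _ _ _
      have hcomm : |(κ:ℝ) * r - (∑ t ∈ S, g (z t))| = |(∑ t ∈ S, g (z t)) - (κ:ℝ) * r| :=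
        abs_sub_comm _ _
      rw [hSc]
      linarith [htri, habs, hcomm.symm.le]
    have h2 := cheby (ι := Fin n) μ hμ0 hμ1 g hg S r hr0 hr1 hμE1 hμE2
      Aᶜ ((κ:ℝ) * ε) hε' hB
    calc (∑ z ∈ Aᶜ, μ z) ≤ (S.card : ℝ) / ((κ:ℝ)*ε)^2 := h2
      _ = (κ:ℝ) / ((κ*ε)^2) := by rw [hSc]

end AuxCovert

/-- Corollary 1: a family of `(n, k_n)` linear codes with `k_n → ∞`, used with uniform
messages over a BI-DMC, cannot be covert: there are tests whose false-alarm and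
missed-detection probabilities both tend to `0`. -/
theorem stmt1 {𝒵 : Type} [Fintype 𝒵] [DecidableEq 𝒵]
    (W : Bool → 𝒵 → ℝ) (hW : ∀ x, IsPMF (W x))
    (hQ0pos : ∀ z, 0 < W false z) (hneq : W true ≠ W false)
    (k : ℕ → ℕ) (hk1 : ∀ n, 1 ≤ n → 1 ≤ k n) (hkn : ∀ n, 1 ≤ n → k n ≤ n)
    (G : ∀ n, Matrix (Fin (k n)) (Fin n) (ZMod 2))
    (hrank : ∀ n, 1 ≤ n → (G n).rank = k n)
    (hkinf : Filter.Tendsto k Filter.atTop Filter.atTop) :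
    ∃ A : ∀ n, Finset (Fin n → 𝒵),
      Filter.Tendsto (fun n => ∑ z ∈ A n, prodCh W n z (fun _ => false))
        Filter.atTop (nhds 0) ∧
      Filter.Tendsto (fun n => ∑ z ∈ (A n)ᶜ, ((2:ℝ)^(k n))⁻¹ * ∑ v : Fin (k n) → ZMod 2,
          prodCh W n z (fun t => if Matrix.vecMul v (G n) t = 1 then true else false))
        Filter.atTop (nhds 0) := by
  classical
  obtain ⟨z0, hz0⟩ := Function.ne_iff.mp hneq
  set ε : ℝ := |(W false z0 + W true z0) / 2 - W false z0| / 2 with hεdef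
  have hε : 0 < ε := by
    rw [hεdef]
    have hne : (W false z0 + W true z0) / 2 - W false z0 ≠ 0 := by
      intro h; apply hz0; linarith
    have := abs_pos.mpr hne
    linarith
  -- choose test sets
  have key : ∀ n : ℕ, ∃ A : Finset (Fin n → 𝒵), 1 ≤ n →
      ((∑ z ∈ A, prodCh W n z (fun _ => false)) ≤ (k n : ℝ) / ((k n * ε) ^ 2) ∧
       (∑ z ∈ Aᶜ, ((2:ℝ)^(k n))⁻¹ * ∑ v : Fin (k n) → ZMod 2,
          prodCh W n z (fun t => if Matrix.vecMul v (G n) t = 1 then true else false))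
          ≤ (k n : ℝ) / ((k n * ε) ^ 2)) := by
    intro n
    by_cases hn : 1 ≤ n
    · obtain ⟨A, hA1, hA2⟩ := key_step W hW z0 ε hε hεdef (hk1 n hn) hn (G n) (hrank n hn)
      exact ⟨A, fun _ => ⟨hA1, hA2⟩⟩
    · exact ⟨∅, fun h => absurd h hn⟩
  choose A hA using key
  -- the bound tends to zero
  have hbound : Filter.Tendsto (fun n => (k n : ℝ) / ((k n * ε) ^ 2))
      Filter.atTop (nhds 0) := by
    have h1 : Filter.Tendsto (fun n => (k n : ℝ)) Filter.atTop Filter.atTop :=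
      tendsto_natCast_atTop_atTop.comp hkinf
    have h2 : Filter.Tendsto (fun n => ((k n : ℝ))⁻¹) Filter.atTop (nhds 0) :=
      Filter.Tendsto.comp tendsto_inv_atTop_zero h1
    have h3 : Filter.Tendsto (fun n => ((k n : ℝ))⁻¹ * (ε ^ 2)⁻¹) Filter.atTop (nhds 0) := by
      simpa using h2.mul_const (ε ^ 2)⁻¹
    apply h3.congr'
    filter_upwards [Filter.eventually_atTop.mpr ⟨1, fun n hn => hk1 n hn⟩] with n hkn1
    have hkpos : (0:ℝ) < k n := by exact_mod_cast hkn1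
    rw [mul_pow]
    field_simp
  have hnonneg1 : ∀ n, 0 ≤ ∑ z ∈ A n, prodCh W n z (fun _ => false) := by
    intro n
    exact Finset.sum_nonneg fun z _ => Finset.prod_nonneg fun t _ => (hW _).1 _
  have hnonneg2 : ∀ n, 0 ≤ ∑ z ∈ (A n)ᶜ, ((2:ℝ)^(k n))⁻¹ * ∑ v : Fin (k n) → ZMod 2,
      prodCh W n z (fun t => if Matrix.vecMul v (G n) t = 1 then true else false) := by
    intro n
    refine Finset.sum_nonneg fun z _ => mul_nonneg (by positivity) ?_
    exact Finset.sum_nonneg fun v _ => Finset.prod_nonneg fun t _ => (hW _).1 _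
  refine ⟨A, ?_, ?_⟩
  · refine squeeze_zero' (Filter.Eventually.of_forall hnonneg1) ?_ hbound
    filter_upwards [Filter.eventually_atTop.mpr ⟨1, fun n (hn : 1 ≤ n) => hn⟩] with n hn
    exact (hA n hn).1
  · refine squeeze_zero' (Filter.Eventually.of_forall hnonneg2) ?_ hbound
    filter_upwards [Filter.eventually_atTop.mpr ⟨1, fun n (hn : 1 ≤ n) => hn⟩] with n hn
    exact (hA n hn).2
end

section
/- Let W be a binary-input discrete memoryless channel with finite output alphabet 𝒵, with Q_0 = W(·|0) everywhere positive and Q_1 = W(·|1) ≠ Q_0. Let G ∈ F_2^{k×n} have rank k, let Q̂^n(z) = 2^{−k} Σ_{v∈F_2^k} W^{⊗n}(z | vG), let m be the number of nonzero columns of G, and set μ = m/(2n) and Q̃ = μ·Q_1 + (1−μ)·Q_0. If D(Q̂^n ‖ Q_0^{⊗n}) ≤ δ for some δ > 0, then δ/n ≥ D(Q̃‖Q_0) ≥ V(Q̃,Q_0)^2 = (μ·V(Q_1,Q_0))^2; consequently μ ≤ (1/V(Q_1,Q_0))·√(δ/n) and m ≤ (2/V(Q_1,Q_0))·√(nδ)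 (a square-root law for the weight of linear codes). -/
open Finset

/-- Kullback–Leibler divergence (natural logarithm) between pmfs on a finite alphabet. -/
noncomputable def KL {𝒵 : Type} [Fintype 𝒵] (P Q : 𝒵 → ℝ) : ℝ :=
  ∑ z, P z * Real.log (P z / Q z)

/-- Total variation distance `V(P,Q) = (1/2)∑_z |P(z)−Q(z)|`. -/
noncomputable def TV {𝒵 : Type} [Fintype 𝒵] (P Q : 𝒵 → ℝ) : ℝ :=
  (1/2) * ∑ z, |P z - Q z|

lemma gibbs {α : Type} [Fintype α] (P R : α → ℝ) (hP0 : ∀ z, 0 ≤ P z) (hP1 : ∑ z, P z = 1)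
    (hR0 : ∀ z, 0 ≤ R z) (hR1 : ∑ z, R z ≤ 1) (hPR : ∀ z, 0 < P z → 0 < R z) :
    0 ≤ ∑ z, P z * Real.log (P z / R z) := by
  have key : ∀ z : α, P z - R z ≤ P z * Real.log (P z / R z) := by
    intro z
    rcases eq_or_lt_of_le (hP0 z) with h | h
    · simp [← h]; exact hR0 z
    · have hr := hPR z h
      have hlog : Real.log (R z / P z) ≤ R z / P z - 1 :=
        Real.log_le_sub_one_of_pos (div_pos hr h)
      have hd : Real.log (P z / R z) = - Real.log (R z / P z) := by
        rw [Real.log_div (ne_of_gt h) (ne_of_gt hr), Real.log_div (ne_of_gt hr) (ne_of_gt h)]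
        ring
      have h2 : 1 - R z / P z ≤ Real.log (P z / R z) := by rw [hd]; linarith
      have h3 : P z * (1 - R z / P z) ≤ P z * Real.log (P z / R z) :=
        mul_le_mul_of_nonneg_left h2 (le_of_lt h)
      have h4 : P z * (1 - R z / P z) = P z - R z := by field_simp
      linarith
  have h5 : ∑ z, (P z - R z) ≤ ∑ z, P z * Real.log (P z / R z) :=
    Finset.sum_le_sum (fun z _ => key z)
  rw [Finset.sum_sub_distrib, hP1] at h5
  linarith

lemma pinsker_weak {α : Type} [Fintype α] (P Q : α → ℝ) (hP0 : ∀ z, 0 ≤ P z)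
    (hP1 : ∑ z, P z = 1) (hQpos : ∀ z, 0 < Q z) (hQ1 : ∑ z, Q z = 1) :
    TV P Q ^ 2 ≤ KL P Q := by
  classical
  set supp := univ.filter (fun z : α => P z ≠ 0) with hsupp
  have hPsupp : ∑ z ∈ supp, P z = 1 := by
    rw [hsupp, Finset.sum_filter_ne_zero]; exact hP1
  have hppos : ∀ z ∈ supp, 0 < P z := fun z hz =>
    lt_of_le_of_ne (hP0 z) (Ne.symm (mem_filter.mp hz).2)
  -- Jensen's inequality for log
  have hjen : ∑ z ∈ supp, P z • Real.log (Real.sqrt (Q z / P z)) ≤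
      Real.log (∑ z ∈ supp, P z • Real.sqrt (Q z / P z)) := by
    apply ConcaveOn.le_map_sum strictConcaveOn_log_Ioi.concaveOn
      (fun z _ => hP0 z) hPsupp
    intro z hz
    exact Real.sqrt_pos.mpr (div_pos (hQpos z) (hppos z hz))
  -- LHS of Jensen equals -(1/2) * KL
  have hLHS : ∑ z ∈ supp, P z • Real.log (Real.sqrt (Q z / P z)) = -(1/2) * KL P Q := by
    have hKL : KL P Q = ∑ z ∈ supp, P z * Real.log (P z / Q z) := by
      rw [KL, hsupp, Finset.sum_filter_of_ne]
      intro z _ h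
      by_contra hne
      exact h (by rw [hne, zero_mul])
    rw [hKL, Finset.mul_sum]
    apply Finset.sum_congr rfl
    intro z hz
    have hp := hppos z hz
    have hq := hQpos z
    rw [smul_eq_mul, Real.log_sqrt (le_of_lt (div_pos hq hp)),
      Real.log_div (ne_of_gt hq) (ne_of_gt hp), Real.log_div (ne_of_gt hp) (ne_of_gt hq)]
    ring
  -- the sum inside the log is at most s := ∑ √(P z * Q z)
  set s := ∑ z, Real.sqrt (P z * Q z) with hs
  have hAeq : ∀ z ∈ supp, P z • Real.sqrt (Q z / P z) = Real.sqrt (P z * Q z) := by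
    intro z hz
    have hp := hppos z hz
    rw [smul_eq_mul, ← Real.sqrt_sq (le_of_lt hp), ← Real.sqrt_mul (sq_nonneg (P z))]
    congr 1
    field_simp
    rw [Real.sqrt_sq hp.le]
    ring
  have hAle : ∑ z ∈ supp, P z • Real.sqrt (Q z / P z) ≤ s := by
    rw [Finset.sum_congr rfl hAeq, hs]
    apply Finset.sum_le_sum_of_subset_of_nonneg (Finset.filter_subset _ _)
    intro z _ _
    exact Real.sqrt_nonneg _
  -- exp(-KL) ≤ s^2
  have hsupp_ne : (∑ z ∈ supp, P z • Real.sqrt (Q z / P z)) > 0 := by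
    have hne : supp.Nonempty := by
      by_contra h
      rw [Finset.not_nonempty_iff_eq_empty] at h
      rw [h, Finset.sum_empty] at hPsupp
      norm_num at hPsupp
    apply Finset.sum_pos _ hne
    intro z hz
    exact mul_pos (hppos z hz) (Real.sqrt_pos.mpr (div_pos (hQpos z) (hppos z hz)))
  have hexp : Real.exp (-(1/2) * KL P Q) ≤ s := by
    calc Real.exp (-(1/2) * KL P Q) = Real.exp (∑ z ∈ supp, P z • Real.log (Real.sqrt (Q z / P z))) := by
          rw [hLHS]
      _ ≤ Real.exp (Real.log (∑ z ∈ supp, P z • Real.sqrt (Q z / P z))) := Real.exp_le_exp.mpr hjen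
      _ = ∑ z ∈ supp, P z • Real.sqrt (Q z / P z) := Real.exp_log hsupp_ne
      _ ≤ s := hAle
  have hexp2 : Real.exp (- KL P Q) ≤ s ^ 2 := by
    have h0 : (0:ℝ) ≤ Real.exp (-(1/2) * KL P Q) := le_of_lt (Real.exp_pos _)
    calc Real.exp (- KL P Q) = Real.exp (-(1/2) * KL P Q) ^ 2 := by
          rw [sq, ← Real.exp_add]; ring_nf
      _ ≤ s ^ 2 := by apply pow_le_pow_left₀ h0 hexp
  -- Cauchy-Schwarz : s^2 ≤ 1 - TV^2
  have hCS : s ^ 2 ≤ (1 - TV P Q) * (1 + TV P Q) := by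
    have hsq : s = ∑ z, Real.sqrt (min (P z) (Q z)) * Real.sqrt (max (P z) (Q z)) := by
      apply Finset.sum_congr rfl
      intro z _
      rw [← Real.sqrt_mul (le_min (hP0 z) (le_of_lt (hQpos z))), min_mul_max]
    have hcs2 := Finset.sum_mul_sq_le_sq_mul_sq univ
      (fun z => Real.sqrt (min (P z) (Q z))) (fun z => Real.sqrt (max (P z) (Q z)))
    have hmin : ∑ z, Real.sqrt (min (P z) (Q z)) ^ 2 = 1 - TV P Q := by
      have : ∀ z ∈ (univ : Finset α), Real.sqrt (min (P z) (Q z)) ^ 2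
          = (P z + Q z - |P z - Q z|) / 2 := by
        intro z _
        rw [Real.sq_sqrt (le_min (hP0 z) (le_of_lt (hQpos z)))]
        have h1 := min_add_max (P z) (Q z)
        have h2 := max_sub_min_eq_abs (P z) (Q z)
        have h3 : |P z - Q z| = |Q z - P z| := abs_sub_comm _ _
        linarith
      rw [Finset.sum_congr rfl this, TV]
      have e1 : ∑ z, (P z + Q z - |P z - Q z|) / 2 =
          (∑ z, P z + ∑ z, Q z - ∑ z, |P z - Q z|)/2 := by
        rw [← Finset.sum_add_distrib, ← Finset.sum_sub_distrib, Finset.sum_div]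
      rw [e1, hP1, hQ1]
      ring
    have hmax : ∑ z, Real.sqrt (max (P z) (Q z)) ^ 2 = 1 + TV P Q := by
      have : ∀ z ∈ (univ : Finset α), Real.sqrt (max (P z) (Q z)) ^ 2
          = (P z + Q z + |P z - Q z|) / 2 := by
        intro z _
        rw [Real.sq_sqrt (le_max_of_le_left (hP0 z))]
        have h1 := min_add_max (P z) (Q z)
        have h2 := max_sub_min_eq_abs (P z) (Q z)
        have h3 : |P z - Q z| = |Q z - P z| := abs_sub_comm _ _
        linarith
      rw [Finset.sum_congr rfl this, TV]
      have e1 : ∑ z, (P z + Q z + |P z - Q z|) / 2 =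
          (∑ z, P z + ∑ z, Q z + ∑ z, |P z - Q z|)/2 := by
        rw [← Finset.sum_add_distrib, ← Finset.sum_add_distrib, Finset.sum_div]
      rw [e1, hP1, hQ1]
      ring
    calc s ^ 2 = (∑ z, Real.sqrt (min (P z) (Q z)) * Real.sqrt (max (P z) (Q z))) ^ 2 := by
          rw [hsq]
      _ ≤ (∑ z, Real.sqrt (min (P z) (Q z)) ^ 2) * (∑ z, Real.sqrt (max (P z) (Q z)) ^ 2) := hcs2
      _ = (1 - TV P Q) * (1 + TV P Q) := by rw [hmin, hmax]
  have hlin := Real.add_one_le_exp (- KL P Q)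
  nlinarith [hexp2, hCS, hlin]

lemma decomp {𝒵 : Type} [Fintype 𝒵] [DecidableEq 𝒵] {n : ℕ} (hn : 0 < n)
    (P : (Fin n → 𝒵) → ℝ) (Q : 𝒵 → ℝ)
    (hP0 : ∀ z, 0 ≤ P z) (hP1 : ∑ z, P z = 1) (hQpos : ∀ w, 0 < Q w) :
    (n : ℝ) * KL (fun w => (n:ℝ)⁻¹ * ∑ t, ∑ z : Fin n → 𝒵, (if z t = w then P z else 0)) Q
      ≤ KL P (fun z => ∏ t, Q (z t)) := by
  classical
  set Pt : Fin n → 𝒵 → ℝ := fun t w => ∑ z, if z t = w then P z else 0 with hPt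
  set Qb : 𝒵 → ℝ := fun w => (n:ℝ)⁻¹ * ∑ t, Pt t w with hQb
  have hnR : (0:ℝ) < n := Nat.cast_pos.mpr hn
  have f1 : ∀ t w, 0 ≤ Pt t w := by
    intro t w
    apply Finset.sum_nonneg
    intro z _
    split <;> simp [hP0 z]
  have f2 : ∀ t, ∑ w, Pt t w = 1 := by
    intro t
    rw [hPt]
    rw [Finset.sum_comm]
    simp only [Finset.sum_ite_eq, Finset.mem_univ, if_true]
    exact hP1
  have f3 : ∀ w, 0 ≤ Qb w :=
    fun w => mul_nonneg (le_of_lt (inv_pos.mpr hnR))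
      (Finset.sum_nonneg fun t _ => f1 t w)
  have f4 : ∑ w, Qb w = 1 := by
    rw [hQb, ← Finset.mul_sum, Finset.sum_comm]
    simp only [f2]
    simp
    field_simp
  have f5 : ∀ (z : Fin n → 𝒵) (t : Fin n), P z ≤ Pt t (z t) := by
    intro z t
    have := Finset.single_le_sum (f := fun z' : Fin n → 𝒵 => if z' t = z t then P z' else 0)
      (fun z' _ => by split <;> simp [hP0 z']) (Finset.mem_univ z)
    simpa using this
  have f6 : ∀ (z : Fin n → 𝒵), 0 < P z → ∀ t, 0 < Qb (z t) := by
    intro z hz t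
    apply mul_pos (inv_pos.mpr hnR)
    have h1 : Pt t (z t) ≤ ∑ t', Pt t' (z t) :=
      Finset.single_le_sum (fun t' _ => f1 t' (z t)) (Finset.mem_univ t)
    have := f5 z t
    linarith
  have marg : ∀ (t : Fin n) (g : 𝒵 → ℝ), ∑ z, P z * g (z t) = ∑ w, Pt t w * g w := by
    intro t g
    rw [eq_comm]
    calc ∑ w, Pt t w * g w = ∑ w, ∑ z, (if z t = w then P z * g w else 0) := by
          apply Finset.sum_congr rfl
          intro w _
          rw [hPt, Finset.sum_mul]
          apply Finset.sum_congr rfl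
          intro z _
          split <;> simp
      _ = ∑ z, ∑ w, (if z t = w then P z * g w else 0) := Finset.sum_comm
      _ = ∑ z, P z * g (z t) := by
          apply Finset.sum_congr rfl
          intro z _
          simp [Finset.sum_ite_eq]
  -- pointwise identity
  have step1 : ∀ z, P z * Real.log (P z / ∏ t, Q (z t))
      = P z * Real.log (P z / ∏ t, Qb (z t))
        + ∑ t, P z * (Real.log (Qb (z t)) - Real.log (Q (z t))) := by
    intro z
    rcases eq_or_lt_of_le (hP0 z) with h | h
    · simp [← h]
    · have hQbz : ∀ t, 0 < Qb (z t) := f6 z h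
      have hprodQ : (0:ℝ) < ∏ t, Q (z t) := Finset.prod_pos (fun t _ => hQpos (z t))
      have hprodQb : (0:ℝ) < ∏ t, Qb (z t) := Finset.prod_pos (fun t _ => hQbz t)
      rw [Real.log_div (ne_of_gt h) (ne_of_gt hprodQ),
        Real.log_div (ne_of_gt h) (ne_of_gt hprodQb),
        Real.log_prod (fun t _ => ne_of_gt (hQpos (z t))),
        Real.log_prod (fun t _ => ne_of_gt (hQbz t)),
        ← Finset.mul_sum, Finset.sum_sub_distrib]
      ring
  -- sum the identity
  have step2 : KL P (fun z => ∏ t, Q (z t))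
      = KL P (fun z => ∏ t, Qb (z t)) + ∑ w, ((n:ℝ) * Qb w) * (Real.log (Qb w) - Real.log (Q w)) := by
    rw [KL, Finset.sum_congr rfl (fun z _ => step1 z), Finset.sum_add_distrib]
    rw [KL]
    congr 1
    rw [Finset.sum_comm]
    rw [Finset.sum_congr rfl (fun t _ => marg t (fun w => Real.log (Qb w) - Real.log (Q w)))]
    rw [Finset.sum_comm]
    apply Finset.sum_congr rfl
    intro w _
    rw [← Finset.sum_mul]
    congr 1
    have : ∑ t, Pt t w = (n:ℝ) * Qb w := by
      rw [hQb]
      field_simp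
    rw [this]
  have step3 : ∑ w, ((n:ℝ) * Qb w) * (Real.log (Qb w) - Real.log (Q w)) = (n:ℝ) * KL Qb Q := by
    rw [KL, Finset.mul_sum]
    apply Finset.sum_congr rfl
    intro w _
    rcases eq_or_lt_of_le (f3 w) with h | h
    · simp [← h]
    · rw [Real.log_div (ne_of_gt h) (ne_of_gt (hQpos w))]
      ring
  have step4 : 0 ≤ KL P (fun z => ∏ t, Qb (z t)) := by
    apply gibbs P (fun z => ∏ t, Qb (z t)) hP0 hP1
    · intro z
      exact Finset.prod_nonneg (fun t _ => f3 (z t))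
    · have : ∑ z : Fin n → 𝒵, ∏ t, Qb (z t) = ∏ t : Fin n, ∑ w, Qb w := by
        rw [Fintype.prod_sum]
      rw [this, f4]
      simp
    · intro z hz
      exact Finset.prod_pos (fun t _ => f6 z hz t)
  have : KL P (fun z => ∏ t, Q (z t)) = KL P (fun z => ∏ t, Qb (z t)) + (n:ℝ) * KL Qb Q := by
    rw [step2, step3]
  rw [this]
  have : KL Qb Q = KL (fun w => (n:ℝ)⁻¹ * ∑ t, ∑ z : Fin n → 𝒵, (if z t = w then P z else 0)) Q := rfl
  rw [← this]
  linarith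

lemma marginal_prod {𝒵 : Type} [Fintype 𝒵] [DecidableEq 𝒵] {n : ℕ}
    (f : Fin n → 𝒵 → ℝ) (hf : ∀ s, ∑ u, f s u = 1) (t : Fin n) (w : 𝒵) :
    ∑ z : Fin n → 𝒵, (if z t = w then ∏ s, f s (z s) else 0) = f t w := by
  classical
  have claimA : ∀ z : Fin n → 𝒵, (if z t = w then ∏ s, f s (z s) else 0)
      = ∏ s, (if s = t then (if z s = w then f s (z s) else 0) else f s (z s)) := by
    intro z
    by_cases h : z t = w
    · rw [if_pos h]
      apply Finset.prod_congr rfl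
      intro s _
      by_cases hs : s = t
      · subst hs; rw [if_pos rfl, if_pos h]
      · rw [if_neg hs]
    · rw [if_neg h]
      rw [eq_comm]
      apply Finset.prod_eq_zero (Finset.mem_univ t)
      rw [if_pos rfl, if_neg h]
  rw [Finset.sum_congr rfl (fun z _ => claimA z)]
  rw [← Fintype.prod_sum (fun s u => if s = t then (if u = w then f s u else 0) else f s u)]
  have hterm : ∀ s : Fin n, ∑ u, (if s = t then (if u = w then f s u else 0) else f s u)
      = if s = t then f t w else 1 := by
    intro s
    by_cases hs : s = t
    · subst hs
      simp [Finset.sum_ite_eq']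
    · simp [hs, hf s]
  rw [Finset.prod_congr rfl (fun s _ => hterm s)]
  simp

lemma half_count {k : ℕ} (φ : (Fin k → ZMod 2) → ZMod 2)
    (hadd : ∀ a b, φ (a + b) = φ a + φ b) (v0 : Fin k → ZMod 2) (hv0 : φ v0 = 1) :
    ((univ.filter fun v => φ v = 1).card : ℝ) = 2^k / 2 ∧
    ((univ.filter fun v => ¬ (φ v = 1)).card : ℝ) = 2^k / 2 := by
  classical
  have hZ : ∀ a : ZMod 2, a ≠ 1 → a = 0 := by decide
  have h11 : (1 : ZMod 2) + 1 = 0 := by decide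
  have hvv : v0 + v0 = 0 := by
    funext i
    change v0 i + v0 i = 0
    have : ∀ a : ZMod 2, a + a = 0 := by decide
    exact this (v0 i)
  have hbij : (univ.filter fun v => φ v = 1).card = (univ.filter fun v => ¬ (φ v = 1)).card := by
    apply Finset.card_bij' (fun v _ => v + v0) (fun v _ => v + v0)
    · intro v hv
      rw [Finset.mem_filter] at hv ⊢
      refine ⟨Finset.mem_univ _, ?_⟩
      rw [hadd, hv.2, hv0, h11]
      decide
    · intro v hv
      rw [Finset.mem_filter] at hv ⊢
      refine ⟨Finset.mem_univ _, ?_⟩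
      rw [hadd, hZ _ hv.2, hv0, zero_add]
    · intro v _; rw [add_assoc, hvv, add_zero]
    · intro v _; rw [add_assoc, hvv, add_zero]
  have hsum : (univ.filter fun v => φ v = 1).card + (univ.filter fun v => ¬ (φ v = 1)).card
      = 2 ^ k := by
    rw [Finset.card_filter_add_card_filter_not]
    rw [Finset.card_univ, Fintype.card_fun]
    simp [ZMod.card]
  constructor
  · have : 2 * ((univ.filter fun v => φ v = 1).card : ℝ) = 2^k := by
      rw [two_mul]
      rw_mod_cast [← hsum, hbij]
    linarith
  · have : 2 * ((univ.filter fun v => ¬ (φ v = 1)).card : ℝ) = 2^k := by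
      rw [two_mul]
      rw_mod_cast [← hsum, hbij]
    linarith

/-- The square-root law for linear codes: if the output distribution induced by an
`(n,k)` linear code is `δ`-close in KL divergence to the innocent distribution, then
with `m` the number of nonzero columns of `G` and `μ = m/(2n)`,
`δ/n ≥ D(Q̃‖Q0) ≥ V(Q̃,Q0)² = (μ V(Q1,Q0))²`, hence `μ ≤ √(δ/n)/V(Q1,Q0)` and
`m ≤ 2√(nδ)/V(Q1,Q0)`. -/
theorem stmt2 {𝒵 : Type} [Fintype 𝒵] [DecidableEq 𝒵]
    (W : Bool → 𝒵 → ℝ) (hW : ∀ x, IsPMF (W x))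
    (hQ0pos : ∀ z, 0 < W false z) (hneq : W true ≠ W false)
    (n k : ℕ) (hn : 1 ≤ n) (hk1 : 1 ≤ k) (hkn : k ≤ n)
    (G : Matrix (Fin k) (Fin n) (ZMod 2)) (hrank : G.rank = k)
    (δ : ℝ) (hδ : 0 < δ)
    (hcov : KL (fun z : Fin n → 𝒵 => ((2:ℝ)^k)⁻¹ * ∑ v : Fin k → ZMod 2,
        prodCh W n z (fun t => if Matrix.vecMul v G t = 1 then true else false))
      (fun z => prodCh W n z (fun _ => false)) ≤ δ) :
    let m : ℕ := (univ.filter fun t : Fin n => ∃ i, G i t ≠ 0).card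
    let μ : ℝ := (m : ℝ) / (2*n)
    let Qt : 𝒵 → ℝ := fun z => μ * W true z + (1-μ) * W false z
    δ/n ≥ KL Qt (W false) ∧
    KL Qt (W false) ≥ TV Qt (W false)^2 ∧
    TV Qt (W false)^2 = (μ * TV (W true) (W false))^2 ∧
    μ ≤ (1 / TV (W true) (W false)) * Real.sqrt (δ/n) ∧
    (m:ℝ) ≤ (2 / TV (W true) (W false)) * Real.sqrt (n*δ) := by
  classical
  intro m μ Qt
  have hnpos : 0 < n := hn
  have hnR : (0:ℝ) < n := Nat.cast_pos.mpr hnpos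
  have hc : (0:ℝ) < (2:ℝ)^k := by positivity
  set c : ℝ := ((2:ℝ)^k)⁻¹ with hcdef
  set x : (Fin k → ZMod 2) → Fin n → Bool :=
    fun v t => if Matrix.vecMul v G t = 1 then true else false with hx
  set P : (Fin n → 𝒵) → ℝ := fun z => c * ∑ v, ∏ t, W (x v t) (z t) with hPdef
  have hcard : ∑ _v : Fin k → ZMod 2, (1:ℝ) = 2^k := by
    rw [Finset.sum_const, Finset.card_univ, Fintype.card_fun]
    simp [ZMod.card]
  have hP0 : ∀ z, 0 ≤ P z := by
    intro z
    apply mul_nonneg (le_of_lt (inv_pos.mpr hc))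
    apply Finset.sum_nonneg
    intro v _
    exact Finset.prod_nonneg (fun t _ => (hW _).1 _)
  have hP1 : ∑ z, P z = 1 := by
    rw [hPdef]
    simp only [← Finset.mul_sum]
    rw [Finset.sum_comm]
    have : ∀ v : Fin k → ZMod 2, ∑ z : Fin n → 𝒵, ∏ t, W (x v t) (z t) = 1 := by
      intro v
      rw [← Fintype.prod_sum (fun t u => W (x v t) u)]
      rw [Finset.prod_congr rfl (fun t _ => (hW (x v t)).2)]
      simp
    rw [Finset.sum_congr rfl (fun v _ => this v), hcard, hcdef]
    field_simp
  -- marginals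
  have hmarg : ∀ (t : Fin n) (w : 𝒵), (∑ z : Fin n → 𝒵, if z t = w then P z else 0)
      = c * ∑ v, W (x v t) w := by
    intro t w
    have e1 : ∀ z : Fin n → 𝒵, (if z t = w then P z else 0)
        = c * ∑ v, (if z t = w then ∏ s, W (x v s) (z s) else 0) := by
      intro z
      by_cases h : z t = w
      · simp [h, hPdef, Finset.mul_sum]
      · simp [h]
    rw [Finset.sum_congr rfl (fun z _ => e1 z), ← Finset.mul_sum]
    congr 1
    rw [Finset.sum_comm]
    apply Finset.sum_congr rfl
    intro v _
    exact marginal_prod (fun s => W (x v s)) (fun s => (hW (x v s)).2) t w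
  -- column sums
  have hcol : ∀ (t : Fin n) (w : 𝒵), (∑ v : Fin k → ZMod 2, W (x v t) w)
      = if (∃ i, G i t ≠ 0) then ((2:ℝ)^k/2) * (W true w + W false w)
        else (2:ℝ)^k * W false w := by
    intro t w
    by_cases hcolt : ∃ i, G i t ≠ 0
    · rw [if_pos hcolt]
      obtain ⟨i, hi⟩ := hcolt
      have hGit : G i t = 1 := by
        have : ∀ a : ZMod 2, a ≠ 0 → a = 1 := by decide
        exact this _ hi
      have hv0 : Matrix.vecMul (Pi.single i 1) G t = 1 := by
        rw [Matrix.single_one_vecMul]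
        exact hGit
      have hadd : ∀ a b : Fin k → ZMod 2,
          Matrix.vecMul (a + b) G t = Matrix.vecMul a G t + Matrix.vecMul b G t := by
        intro a b
        rw [Matrix.add_vecMul]
        rfl
      obtain ⟨hc1, hc0⟩ := half_count (fun v => Matrix.vecMul v G t) hadd (Pi.single i 1) hv0
      have e2 : ∀ v : Fin k → ZMod 2, W (x v t) w
          = if Matrix.vecMul v G t = 1 then W true w else W false w := by
        intro v
        rw [hx]
        exact apply_ite (fun b => W b w) _ _ _
      rw [Finset.sum_congr rfl (fun v _ => e2 v), Finset.sum_ite,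
        Finset.sum_const, Finset.sum_const, nsmul_eq_mul, nsmul_eq_mul, hc1, hc0]
      ring
    · rw [if_neg hcolt]
      push_neg at hcolt
      have e3 : ∀ v : Fin k → ZMod 2, W (x v t) w = W false w := by
        intro v
        have hz : Matrix.vecMul v G t = 0 := by
          show dotProduct v (fun i => G i t) = 0
          simp [dotProduct, hcolt]
        have h01 : (0 : ZMod 2) ≠ 1 := by decide
        rw [hx]
        simp only [hz, if_neg h01]
      rw [Finset.sum_congr rfl (fun v _ => e3 v), Finset.sum_const, Finset.card_univ,
        Fintype.card_fun, nsmul_eq_mul]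
      simp [ZMod.card]
  -- m ≤ n
  have hmn : m ≤ n := by
    calc m ≤ (univ : Finset (Fin n)).card := Finset.card_filter_le _ _
      _ = n := by simp
  have hmneg : ((univ.filter fun t : Fin n => ¬ ∃ i, G i t ≠ 0).card : ℝ) = (n : ℝ) - m := by
    have := Finset.card_filter_add_card_filter_not
      (s := (univ : Finset (Fin n))) (p := fun t => ∃ i, G i t ≠ 0)
    rw [Finset.card_univ, Fintype.card_fin] at this
    have hm' : m + (univ.filter fun t : Fin n => ¬ ∃ i, G i t ≠ 0).card = n := this
    push_cast [← hm']
    ring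
  -- the average marginal equals Qt
  have hQbar : ∀ w : 𝒵, ((n:ℝ))⁻¹ * ∑ t : Fin n, (∑ z : Fin n → 𝒵, if z t = w then P z else 0)
      = Qt w := by
    intro w
    rw [Finset.sum_congr rfl (fun t _ => hmarg t w)]
    rw [Finset.sum_congr rfl (fun t (_ : t ∈ univ) => by rw [hcol t w])]
    rw [← Finset.mul_sum, Finset.sum_ite, Finset.sum_const, Finset.sum_const,
      nsmul_eq_mul, nsmul_eq_mul, hmneg]
    show ((n:ℝ))⁻¹ * (c * ((m:ℝ) * ((2:ℝ)^k/2 * (W true w + W false w))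
      + ((n:ℝ) - m) * ((2:ℝ)^k * W false w)))
      = (m:ℝ)/(2*n) * W true w + (1 - (m:ℝ)/(2*n)) * W false w
    rw [hcdef]
    field_simp
    ring
  -- apply the decomposition
  have hdec := decomp hnpos P (W false) hP0 hP1 hQ0pos
  have hdec2 : (n:ℝ) * KL Qt (W false) ≤ KL P (fun z => ∏ t, W false (z t)) := by
    have : (fun w => ((n:ℝ))⁻¹ * ∑ t : Fin n, (∑ z : Fin n → 𝒵, if z t = w then P z else 0))
        = Qt := funext hQbar
    rwa [this] at hdec
  have hcov' : KL P (fun z => ∏ t, W false (z t)) ≤ δ := hcov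
  have hKLle : KL Qt (W false) ≤ δ/n := by
    rw [le_div_iff₀ hnR]
    calc KL Qt (W false) * n = n * KL Qt (W false) := by ring
      _ ≤ KL P (fun z => ∏ t, W false (z t)) := hdec2
      _ ≤ δ := hcov'
  -- Qt is a pmf
  have hμ0 : 0 ≤ μ := by positivity
  have hμ1 : μ ≤ 1 := by
    show (m:ℝ)/(2*n) ≤ 1
    rw [div_le_one (by linarith)]
    have : (m:ℝ) ≤ n := Nat.cast_le.mpr hmn
    linarith
  have hQt0 : ∀ z, 0 ≤ Qt z := by
    intro z
    have := (hW true).1 z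
    have := (hW false).1 z
    have h1 : 0 ≤ μ * W true z := mul_nonneg hμ0 (by assumption)
    have h2 : 0 ≤ (1-μ) * W false z := mul_nonneg (by linarith) (by assumption)
    show 0 ≤ μ * W true z + (1-μ) * W false z
    linarith
  have hQt1 : ∑ z, Qt z = 1 := by
    show ∑ z, (μ * W true z + (1-μ) * W false z) = 1
    rw [Finset.sum_add_distrib, ← Finset.mul_sum, ← Finset.mul_sum,
      (hW true).2, (hW false).2]
    ring
  have hpin := pinsker_weak Qt (W false) hQt0 hQt1 hQ0pos (hW false).2
  -- TV equality
  have hTVeq : TV Qt (W false) = μ * TV (W true) (W false) := by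
    rw [TV, TV]
    have : ∀ z ∈ (univ : Finset 𝒵), |Qt z - W false z| = μ * |W true z - W false z| := by
      intro z _
      have : Qt z - W false z = μ * (W true z - W false z) := by
        show μ * W true z + (1-μ) * W false z - W false z = _
        ring
      rw [this, abs_mul, abs_of_nonneg hμ0]
    rw [Finset.sum_congr rfl this, ← Finset.mul_sum]
    ring
  -- positivity of TV (W true) (W false)
  have hV : 0 < TV (W true) (W false) := by
    obtain ⟨z0, hz0⟩ := Function.ne_iff.mp hneq
    have h1 : 0 < |W true z0 - W false z0| := abs_pos.mpr (sub_ne_zero.mpr hz0)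
    have h2 : |W true z0 - W false z0| ≤ ∑ z, |W true z - W false z| :=
      Finset.single_le_sum (f := fun z => |W true z - W false z|)
        (fun z _ => abs_nonneg _) (Finset.mem_univ z0)
    rw [TV]
    linarith
  refine ⟨hKLle, hpin, by rw [hTVeq], ?_, ?_⟩
  · -- μ ≤ (1/V) √(δ/n)
    have h1 : (μ * TV (W true) (W false))^2 ≤ δ/n := by
      rw [← hTVeq]
      calc TV Qt (W false)^2 ≤ KL Qt (W false) := hpin
        _ ≤ δ/n := hKLle
    have h2 : μ * TV (W true) (W false) ≤ Real.sqrt (δ/n) := by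
      have h3 : 0 ≤ μ * TV (W true) (W false) := mul_nonneg hμ0 (le_of_lt hV)
      calc μ * TV (W true) (W false) = Real.sqrt ((μ * TV (W true) (W false))^2) :=
            (Real.sqrt_sq h3).symm
        _ ≤ Real.sqrt (δ/n) := Real.sqrt_le_sqrt h1
    rw [one_div, inv_mul_eq_div, le_div_iff₀ hV]
    exact h2
  · -- m ≤ (2/V) √(nδ)
    have h1 : (μ * TV (W true) (W false))^2 ≤ δ/n := by
      rw [← hTVeq]
      calc TV Qt (W false)^2 ≤ KL Qt (W false) := hpin
        _ ≤ δ/n := hKLle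
    have h2 : μ * TV (W true) (W false) ≤ Real.sqrt (δ/n) := by
      have h3 : 0 ≤ μ * TV (W true) (W false) := mul_nonneg hμ0 (le_of_lt hV)
      calc μ * TV (W true) (W false) = Real.sqrt ((μ * TV (W true) (W false))^2) :=
            (Real.sqrt_sq h3).symm
        _ ≤ Real.sqrt (δ/n) := Real.sqrt_le_sqrt h1
    have hmval : (m:ℝ) = 2 * n * μ := by
      show (m:ℝ) = 2 * n * ((m:ℝ)/(2*n))
      field_simp
    have hsqrt : Real.sqrt ((n:ℝ)*δ) = (n:ℝ) * Real.sqrt (δ/n) := by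
      rw [show (n:ℝ)*δ = (n:ℝ)^2 * (δ/n) by field_simp,
        Real.sqrt_mul (sq_nonneg _), Real.sqrt_sq (le_of_lt hnR)]
    have hμle : μ ≤ Real.sqrt (δ/n) / TV (W true) (W false) := by
      rw [le_div_iff₀ hV]
      exact h2
    calc (m:ℝ) = 2 * n * μ := hmval
      _ ≤ 2 * n * (Real.sqrt (δ/n) / TV (W true) (W false)) := by
          apply mul_le_mul_of_nonneg_left hμle (by linarith)
      _ = (2 / TV (W true) (W false)) * Real.sqrt ((n:ℝ)*δ) := by
          rw [hsqrt]
          ring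
end

section
/- Let W be a binary-input discrete memoryless channel with finite output alphabet 𝒵, with Q_0 = W(·|0) everywhere positive and Q_1 = W(·|1). Let G ∈ F_2^{k×n}, let 𝒮 ⊆ {1,…,n} be a set of column indices such that the columns {g_j}_{j∈𝒮} of G are nonzero and pairwise distinct, and define for z ∈ 𝒵^n the statistic T(z) = (1/|𝒮|) Σ_{j∈𝒮} (Q_1(z_j)−Q_0(z_j))/Q_0(z_j). Let Q̂^n(z) = 2^{−k} Σ_{v∈F_2^k} W^{⊗n}(z | vG). Then: (i) E_{Q_0^{⊗n}}[T(Z)] = 0 and Var_{Q_0^{⊗n}}(T(Z)) = χ_2(Q_1‖Q_0)/|𝒮|; (ii) E_{Q̂^n}[T(Z)] = χ_2(Q_1‖Q_0)/2 and Var_{Q̂^n}(T(Z)) = (1/|𝒮|)·( χ_2(Q_1‖Q_0) + χ_3(Q_1‖Q_0)/2 − χ_2(Q_1‖Q_0)^2/4 ). -/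
open Finset

/-- Expectation of `f` under the pmf `p` on a finite alphabet. -/
noncomputable def expec {α : Type} [Fintype α] (p f : α → ℝ) : ℝ :=
  ∑ z, p z * f z

/-- Variance of `f` under the pmf `p` on a finite alphabet. -/
noncomputable def varia {α : Type} [Fintype α] (p f : α → ℝ) : ℝ :=
  ∑ z, p z * (f z - expec p f)^2

/-! ### Auxiliary lemmas -/

lemma aux_sum_prod_pi {𝒵 : Type} [Fintype 𝒵] [DecidableEq 𝒵] {n : ℕ} (q : Fin n → 𝒵 → ℝ) :
    ∑ z : Fin n → 𝒵, ∏ t, q t (z t) = ∏ t, ∑ y, q t y := by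
  rw [Finset.prod_univ_sum, Fintype.piFinset_univ]

lemma aux_sum_prod_mul {𝒵 : Type} [Fintype 𝒵] [DecidableEq 𝒵] {n : ℕ} (q w : Fin n → 𝒵 → ℝ) :
    ∑ z : Fin n → 𝒵, (∏ t, q t (z t)) * (∏ t, w t (z t)) = ∏ t, ∑ y, q t y * w t y := by
  rw [← aux_sum_prod_pi]
  congr 1; funext z; rw [← Finset.prod_mul_distrib]

lemma aux_sum_prod_single {𝒵 : Type} [Fintype 𝒵] [DecidableEq 𝒵] {n : ℕ} (q : Fin n → 𝒵 → ℝ)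
    (hq : ∀ t, ∑ y, q t y = 1) (j : Fin n) (f : 𝒵 → ℝ) :
    ∑ z : Fin n → 𝒵, (∏ t, q t (z t)) * f (z j) = ∑ y, q j y * f y := by
  have h1 : ∀ z : Fin n → 𝒵, f (z j) = ∏ t, (if t = j then f (z t) else 1) := by
    intro z; simp [Finset.prod_ite_eq']
  calc ∑ z : Fin n → 𝒵, (∏ t, q t (z t)) * f (z j)
      = ∑ z : Fin n → 𝒵, (∏ t, q t (z t)) * (∏ t, (if t = j then f (z t) else 1)) := by
        simp_rw [← h1]
    _ = ∏ t, ∑ y, q t y * (if t = j then f y else 1) :=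
        aux_sum_prod_mul q (fun t y => if t = j then f y else 1)
    _ = ∑ y, q j y * f y := by
        rw [Finset.prod_eq_single j]
        · simp
        · intro t _ ht; simp [ht, hq t]
        · simp

lemma aux_sum_prod_double {𝒵 : Type} [Fintype 𝒵] [DecidableEq 𝒵] {n : ℕ} (q : Fin n → 𝒵 → ℝ)
    (hq : ∀ t, ∑ y, q t y = 1) {j l : Fin n} (hjl : j ≠ l) (f g : 𝒵 → ℝ) :
    ∑ z : Fin n → 𝒵, (∏ t, q t (z t)) * (f (z j) * g (z l)) =
      (∑ y, q j y * f y) * (∑ y, q l y * g y) := by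
  have h1 : ∀ z : Fin n → 𝒵, f (z j) * g (z l)
      = ∏ t, ((if t = j then f (z t) else 1) * (if t = l then g (z t) else 1)) := by
    intro z; rw [Finset.prod_mul_distrib]; simp [Finset.prod_ite_eq']
  calc ∑ z : Fin n → 𝒵, (∏ t, q t (z t)) * (f (z j) * g (z l))
      = ∏ t, ∑ y, q t y * ((if t = j then f y else 1) * (if t = l then g y else 1)) := by
        simp_rw [← aux_sum_prod_mul q
          (fun t y => (if t = j then f y else 1) * (if t = l then g y else 1))]
        congr 1; funext z; rw [← h1 z]
    _ = ∏ t ∈ ({j, l} : Finset (Fin n)),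
          ∑ y, q t y * ((if t = j then f y else 1) * (if t = l then g y else 1)) := by
        refine (Finset.prod_subset (Finset.subset_univ _) ?_).symm
        intro t _ ht
        simp only [Finset.mem_insert, Finset.mem_singleton, not_or] at ht
        simp [ht.1, ht.2, hq t]
    _ = (∑ y, q j y * f y) * (∑ y, q l y * g y) := by
        rw [Finset.prod_pair hjl]
        congr 1
        · simp [hjl]
        · simp [hjl.symm]

section SingleLetter
variable {𝒵 : Type} [Fintype 𝒵] (Q1 Q0 : 𝒵 → ℝ)

lemma aux_mom_psi_0 (h0 : ∀ z, 0 < Q0 z) (h1 : ∑ z, Q1 z = 1) (h2 : ∑ z, Q0 z = 1) :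
    ∑ y, Q0 y * ((Q1 y - Q0 y) / Q0 y) = 0 := by
  have : ∀ y, Q0 y * ((Q1 y - Q0 y) / Q0 y) = Q1 y - Q0 y := by
    intro y; rw [mul_div_assoc']; exact mul_div_cancel_left₀ _ (h0 y).ne'
  simp_rw [this, Finset.sum_sub_distrib, h1, h2, sub_self]

lemma aux_mom_psi_sq_0 (h0 : ∀ z, 0 < Q0 z) :
    ∑ y, Q0 y * ((Q1 y - Q0 y) / Q0 y) ^ 2 = chiDiv 2 Q1 Q0 := by
  unfold chiDiv
  refine Finset.sum_congr rfl fun y _ => ?_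
  have := (h0 y).ne'
  field_simp
  ring

lemma aux_mom_psi_1 (h0 : ∀ z, 0 < Q0 z) (h1 : ∑ z, Q1 z = 1) (h2 : ∑ z, Q0 z = 1) :
    ∑ y, Q1 y * ((Q1 y - Q0 y) / Q0 y) = chiDiv 2 Q1 Q0 := by
  have key : ∀ y, Q1 y * ((Q1 y - Q0 y) / Q0 y)
      = (Q1 y - Q0 y) ^ 2 / Q0 y ^ 1 + (Q1 y - Q0 y) := by
    intro y; have := (h0 y).ne'; field_simp; ring
  simp_rw [key, Finset.sum_add_distrib, Finset.sum_sub_distrib, h1, h2, sub_self, add_zero]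
  rfl

lemma aux_mom_psi_sq_1 (h0 : ∀ z, 0 < Q0 z) :
    ∑ y, Q1 y * ((Q1 y - Q0 y) / Q0 y) ^ 2 = chiDiv 2 Q1 Q0 + chiDiv 3 Q1 Q0 := by
  unfold chiDiv
  rw [← Finset.sum_add_distrib]
  refine Finset.sum_congr rfl fun y _ => ?_
  have := (h0 y).ne'
  field_simp
  ring

end SingleLetter

lemma aux_varia_eq {α : Type} [Fintype α] (p f : α → ℝ) (hp : ∑ z, p z = 1) :
    varia p f = expec p (fun z => f z ^ 2) - (expec p f) ^ 2 := by
  have h : varia p f = ∑ z, (p z * f z ^ 2 - 2 * expec p f * (p z * f z)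
      + (expec p f) ^ 2 * p z) := Finset.sum_congr rfl fun z _ => by ring
  rw [h, Finset.sum_add_distrib, Finset.sum_sub_distrib, ← Finset.mul_sum, ← Finset.mul_sum, hp]
  show _ = (∑ z, p z * f z ^ 2) - _
  unfold expec
  ring

/-! ### Characters of `ZMod 2` -/

noncomputable def auxEps : ZMod 2 → ℝ := fun a => if a = 1 then -1 else 1
noncomputable def auxInd : ZMod 2 → ℝ := fun a => if a = 1 then 1 else 0

lemma auxEps_zero : auxEps 0 = 1 := by simp [auxEps]

lemma auxEps_add (a b : ZMod 2) : auxEps (a + b) = auxEps a * auxEps b := by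
  have hz : ∀ c : ZMod 2, c = 0 ∨ c = 1 := by decide
  rcases hz a with rfl | rfl <;> rcases hz b with rfl | rfl <;> simp +decide [auxEps]

lemma auxInd_eq (a : ZMod 2) : auxInd a = (1 - auxEps a) / 2 := by
  have hz : ∀ c : ZMod 2, c = 0 ∨ c = 1 := by decide
  rcases hz a with rfl | rfl <;> simp +decide [auxInd, auxEps] <;> norm_num

lemma auxInd_mul_auxInd (a b : ZMod 2) :
    auxInd a * auxInd b = (1 - auxEps a - auxEps b + auxEps (a + b)) / 4 := by
  have hz : ∀ c : ZMod 2, c = 0 ∨ c = 1 := by decide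
  rcases hz a with rfl | rfl <;> rcases hz b with rfl | rfl <;> simp +decide [auxInd, auxEps] <;> norm_num

lemma aux_sum_zmod2 (F : ZMod 2 → ℝ) : ∑ a : ZMod 2, F a = F 0 + F 1 := by
  rw [show (univ : Finset (ZMod 2)) = {0, 1} from rfl]
  rw [Finset.sum_insert (by decide), Finset.sum_singleton]

lemma auxEps_sum_fin {ι : Type*} [DecidableEq ι] (f : ι → ZMod 2) (s : Finset ι) :
    auxEps (∑ i ∈ s, f i) = ∏ i ∈ s, auxEps (f i) := by
  induction s using Finset.induction_on with
  | empty => simp [auxEps_zero]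
  | insert a s h ih => rw [Finset.sum_insert h, Finset.prod_insert h, auxEps_add, ih]

lemma aux_sum_eps_dot {k : ℕ} (g : Fin k → ZMod 2) (hg : g ≠ 0) :
    ∑ v : Fin k → ZMod 2, auxEps (∑ i, v i * g i) = 0 := by
  simp_rw [auxEps_sum_fin _ univ]
  have h := Finset.prod_univ_sum (fun _ : Fin k => (univ : Finset (ZMod 2)))
    (fun i a => auxEps (a * g i))
  rw [Fintype.piFinset_univ] at h
  rw [← h]
  obtain ⟨i0, hi0⟩ : ∃ i, g i ≠ 0 := by
    by_contra hc; push_neg at hc; exact hg (funext hc)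
  have hg1 : g i0 = 1 := by revert hi0; generalize g i0 = a; revert a; decide
  refine Finset.prod_eq_zero (Finset.mem_univ i0) ?_
  rw [aux_sum_zmod2]
  simp [hg1, auxEps]

lemma aux_card_vecs (k : ℕ) : ∑ _v : Fin k → ZMod 2, (1 : ℝ) = 2 ^ k := by
  rw [Finset.sum_const, nsmul_eq_mul, mul_one, Finset.card_univ]
  simp [Fintype.card_fun]

lemma aux_sum_ind_dot {k : ℕ} (g : Fin k → ZMod 2) (hg : g ≠ 0) :
    ∑ v : Fin k → ZMod 2, auxInd (∑ i, v i * g i) = 2 ^ k / 2 := by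
  simp_rw [auxInd_eq, sub_div]
  rw [Finset.sum_sub_distrib, ← Finset.sum_div, ← Finset.sum_div, aux_sum_eps_dot g hg,
    aux_card_vecs]
  ring

lemma aux_sum_ind_dot_two {k : ℕ} (g h : Fin k → ZMod 2) (hg : g ≠ 0) (hh : h ≠ 0)
    (hgh : g ≠ h) :
    ∑ v : Fin k → ZMod 2, auxInd (∑ i, v i * g i) * auxInd (∑ i, v i * h i) = 2 ^ k / 4 := by
  have hsum : ∀ v : Fin k → ZMod 2, (∑ i, v i * g i) + (∑ i, v i * h i)
      = ∑ i, v i * (g i + h i) := by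
    intro v; rw [← Finset.sum_add_distrib]; exact Finset.sum_congr rfl fun i _ => by ring
  have hne : (fun i => g i + h i) ≠ 0 := by
    intro hc
    apply hgh
    funext i
    have h2 := congrFun hc i
    simp only [Pi.zero_apply] at h2
    have h3 : g i = -h i := by linear_combination h2
    rw [h3]; rw [show (-h i) = h i from by rw [CharTwo.neg_eq]]
  simp_rw [auxInd_mul_auxInd, hsum]
  have e1 := aux_sum_eps_dot g hg
  have e2 := aux_sum_eps_dot h hh
  have e3 := aux_sum_eps_dot _ hne
  rw [← Finset.sum_div, Finset.sum_add_distrib, Finset.sum_sub_distrib, Finset.sum_sub_distrib,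
    e1, e2, aux_card_vecs]
  rw [show (∑ v : Fin k → ZMod 2, auxEps (∑ i, v i * (fun i => g i + h i) i)) = 0 from e3]
  ring

/-! ### Per-codeword moments -/

section Codeword
variable {𝒵 : Type} [Fintype 𝒵] [DecidableEq 𝒵] {n : ℕ}
  (W : Bool → 𝒵 → ℝ) (hW : ∀ x, IsPMF (W x)) (hQ0pos : ∀ z, 0 < W false z)
include hW hQ0pos

omit hQ0pos in
lemma aux_prodCh_mass (x : Fin n → Bool) : ∑ z : Fin n → 𝒵, prodCh W n z x = 1 := by
  unfold prodCh
  rw [aux_sum_prod_pi]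
  exact Finset.prod_eq_one fun t _ => (hW (x t)).2

lemma aux_mom_psi (b : Bool) :
    ∑ y, W b y * ((W true y - W false y) / W false y)
      = if b then chiDiv 2 (W true) (W false) else 0 := by
  cases b
  · simpa using aux_mom_psi_0 (W true) (W false) hQ0pos (hW true).2 (hW false).2
  · simpa using aux_mom_psi_1 (W true) (W false) hQ0pos (hW true).2 (hW false).2

lemma aux_mom_psi_sq (b : Bool) :
    ∑ y, W b y * ((W true y - W false y) / W false y) ^ 2
      = chiDiv 2 (W true) (W false) + if b then chiDiv 3 (W true) (W false) else 0 := by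
  cases b
  · simpa using aux_mom_psi_sq_0 (W true) (W false) hQ0pos
  · simpa using aux_mom_psi_sq_1 (W true) (W false) hQ0pos

lemma aux_codeword_M1 (𝒮 : Finset (Fin n)) (x : Fin n → Bool) :
    ∑ z : Fin n → 𝒵, prodCh W n z x
        * (∑ j ∈ 𝒮, (W true (z j) - W false (z j)) / W false (z j))
      = ∑ j ∈ 𝒮, (if x j then chiDiv 2 (W true) (W false) else 0) := by
  unfold prodCh
  simp_rw [Finset.mul_sum]
  rw [Finset.sum_comm]
  refine Finset.sum_congr rfl fun j _ => ?_
  rw [aux_sum_prod_single (fun t => W (x t)) (fun t => (hW (x t)).2) j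
    (fun y => (W true y - W false y) / W false y)]
  exact aux_mom_psi W hW hQ0pos (x j)

lemma aux_codeword_M2 (𝒮 : Finset (Fin n)) (x : Fin n → Bool) :
    ∑ z : Fin n → 𝒵, prodCh W n z x
        * (∑ j ∈ 𝒮, (W true (z j) - W false (z j)) / W false (z j)) ^ 2
      = ∑ j ∈ 𝒮, ∑ l ∈ 𝒮, (if j = l
          then chiDiv 2 (W true) (W false) + (if x j then chiDiv 3 (W true) (W false) else 0)
          else (if x j then chiDiv 2 (W true) (W false) else 0)
            * (if x l then chiDiv 2 (W true) (W false) else 0)) := by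
  unfold prodCh
  have expand : ∀ z : Fin n → 𝒵,
      (∑ j ∈ 𝒮, (W true (z j) - W false (z j)) / W false (z j)) ^ 2
      = ∑ j ∈ 𝒮, ∑ l ∈ 𝒮, ((W true (z j) - W false (z j)) / W false (z j))
          * ((W true (z l) - W false (z l)) / W false (z l)) := by
    intro z; rw [sq, Finset.sum_mul_sum]
  simp_rw [expand, Finset.mul_sum]
  rw [Finset.sum_comm]
  refine Finset.sum_congr rfl fun j _ => ?_
  rw [Finset.sum_comm]
  refine Finset.sum_congr rfl fun l _ => ?_
  by_cases hjl : j = l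
  · subst hjl
    simp only [if_pos rfl]
    have h2 : ∀ z : Fin n → 𝒵,
        (∏ t, W (x t) (z t)) * (((W true (z j) - W false (z j)) / W false (z j))
          * ((W true (z j) - W false (z j)) / W false (z j)))
        = (∏ t, W (x t) (z t)) * ((W true (z j) - W false (z j)) / W false (z j)) ^ 2 := by
      intro z; ring
    simp_rw [h2]
    rw [aux_sum_prod_single (fun t => W (x t)) (fun t => (hW (x t)).2) j
      (fun y => ((W true y - W false y) / W false y) ^ 2)]
    exact aux_mom_psi_sq W hW hQ0pos (x j)
  · rw [if_neg hjl]
    rw [aux_sum_prod_double (fun t => W (x t)) (fun t => (hW (x t)).2) hjl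
      (fun y => (W true y - W false y) / W false y)
      (fun y => (W true y - W false y) / W false y)]
    rw [aux_mom_psi W hW hQ0pos (x j), aux_mom_psi W hW hQ0pos (x l)]

end Codeword

lemma aux_diag_sum {α : Type} [DecidableEq α] (s : Finset α) (a b : ℝ) :
    ∑ j ∈ s, ∑ l ∈ s, (if j = l then a else b)
      = s.card * a + (s.card * (s.card - 1)) * b := by
  have hin : ∀ j ∈ s, ∑ l ∈ s, (if j = l then a else b) = b * s.card + (a - b) := by
    intro j hj
    have h1 : ∀ l, (if j = l then a else b) = b + (if j = l then a - b else 0) := by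
      intro l; split <;> ring
    simp_rw [h1]
    rw [Finset.sum_add_distrib, Finset.sum_const, Finset.sum_ite_eq s j (fun _ => a - b),
      if_pos hj, nsmul_eq_mul]
    ring
  rw [Finset.sum_congr rfl hin, Finset.sum_const, nsmul_eq_mul]
  ring

lemma aux_expec_scaled {α : Type} [Fintype α] (p S : α → ℝ) (a : ℝ) :
    expec p (fun z => a * S z) = a * ∑ z, p z * S z := by
  unfold expec; rw [Finset.mul_sum]; exact Finset.sum_congr rfl fun z _ => by ring

lemma aux_expec_scaled_sq {α : Type} [Fintype α] (p S : α → ℝ) (a : ℝ) :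
    expec p (fun z => (a * S z) ^ 2) = a ^ 2 * ∑ z, p z * S z ^ 2 := by
  unfold expec; rw [Finset.mul_sum]; exact Finset.sum_congr rfl fun z _ => by ring

lemma aux_mix_sum {α β : Type} [Fintype α] [Fintype β] (a : ℝ) (P : β → α → ℝ) (f : α → ℝ) :
    ∑ z, (a * ∑ v, P v z) * f z = a * ∑ v, ∑ z, P v z * f z := by
  calc ∑ z, (a * ∑ v, P v z) * f z = ∑ z, ∑ v, a * (P v z * f z) := by
        refine Finset.sum_congr rfl fun z _ => ?_
        rw [Finset.mul_sum, Finset.sum_mul]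
        exact Finset.sum_congr rfl fun v _ => by ring
    _ = ∑ v, ∑ z, a * (P v z * f z) := Finset.sum_comm
    _ = a * ∑ v, ∑ z, P v z * f z := by
        rw [Finset.mul_sum]
        exact Finset.sum_congr rfl fun v _ => (Finset.mul_sum _ _ _).symm

/-- Moments of the detection statistic `T(z) = (1/|𝒮|)∑_{j∈𝒮}(Q1(z_j)−Q0(z_j))/Q0(z_j)`
under the innocent distribution `Q0^{⊗n}` and under the code-induced distribution
`Q̂ⁿ`, when the columns of `G` indexed by `𝒮` are nonzero and pairwise distinct. -/
theorem stmt4 {𝒵 : Type} [Fintype 𝒵] [DecidableEq 𝒵]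
    (W : Bool → 𝒵 → ℝ) (hW : ∀ x, IsPMF (W x)) (hQ0pos : ∀ z, 0 < W false z)
    (n k : ℕ)
    (G : Matrix (Fin k) (Fin n) (ZMod 2))
    (𝒮 : Finset (Fin n)) (h𝒮ne : 𝒮.Nonempty)
    (hnz : ∀ j ∈ 𝒮, (fun i => G i j) ≠ 0)
    (hdist : ∀ j ∈ 𝒮, ∀ l ∈ 𝒮, j ≠ l → (fun i => G i j) ≠ (fun i => G i l)) :
    let T : (Fin n → 𝒵) → ℝ := fun z =>
      (𝒮.card : ℝ)⁻¹ * ∑ j ∈ 𝒮, (W true (z j) - W false (z j)) / W false (z j)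
    let Q0n : (Fin n → 𝒵) → ℝ := fun z => prodCh W n z (fun _ => false)
    let Qhat : (Fin n → 𝒵) → ℝ := fun z => ((2:ℝ)^k)⁻¹ * ∑ v : Fin k → ZMod 2,
        prodCh W n z (fun t => if Matrix.vecMul v G t = 1 then true else false)
    expec Q0n T = 0 ∧
    varia Q0n T = chiDiv 2 (W true) (W false) / 𝒮.card ∧
    expec Qhat T = chiDiv 2 (W true) (W false) / 2 ∧
    varia Qhat T = (𝒮.card : ℝ)⁻¹ * (chiDiv 2 (W true) (W false)
      + chiDiv 3 (W true) (W false) / 2 - (chiDiv 2 (W true) (W false))^2 / 4) := by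
  intro T Q0n Qhat
  have hc : (𝒮.card : ℝ) ≠ 0 := Nat.cast_ne_zero.mpr (Finset.card_pos.mpr h𝒮ne).ne'
  have h2k : ((2:ℝ))^k ≠ 0 := by positivity
  have hvm : ∀ (v : Fin k → ZMod 2) (j : Fin n), Matrix.vecMul v G j = ∑ i, v i * G i j := by
    intro v j; simp [Matrix.vecMul, dotProduct]
  have hindA : ∀ (A : ℝ) (v : Fin k → ZMod 2) (j : Fin n),
      (if (if Matrix.vecMul v G j = 1 then true else false) = true then A else 0)
        = A * auxInd (∑ i, v i * G i j) := by
    intro A v j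
    rw [← hvm v j]
    by_cases h : Matrix.vecMul v G j = 1 <;> simp [h, auxInd]
  have hcolnz : ∀ j ∈ 𝒮, ∑ v : Fin k → ZMod 2, auxInd (∑ i, v i * G i j) = 2^k/2 :=
    fun j hj => aux_sum_ind_dot _ (hnz j hj)
  have hconst : ∀ A : ℝ, ∑ _v : Fin k → ZMod 2, A = 2^k * A := by
    intro A
    rw [Finset.sum_const, nsmul_eq_mul, Finset.card_univ]
    simp [Fintype.card_fun]
  -- Part A : mean under Q0n
  have hA : expec (fun z : Fin n → 𝒵 => prodCh W n z (fun _ => false))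
      (fun z => (𝒮.card : ℝ)⁻¹ * ∑ j ∈ 𝒮, (W true (z j) - W false (z j)) / W false (z j))
      = 0 := by
    rw [aux_expec_scaled]
    rw [show (∑ z : Fin n → 𝒵, (fun z : Fin n → 𝒵 => prodCh W n z (fun _ => false)) z
        * (∑ j ∈ 𝒮, (W true (z j) - W false (z j)) / W false (z j)))
      = ∑ j ∈ 𝒮, (if (fun _ : Fin n => false) j then chiDiv 2 (W true) (W false) else 0)
      from aux_codeword_M1 W hW hQ0pos 𝒮 (fun _ => false)]
    simp
  -- Part B : variance under Q0n
  have hB : varia (fun z : Fin n → 𝒵 => prodCh W n z (fun _ => false))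
      (fun z => (𝒮.card : ℝ)⁻¹ * ∑ j ∈ 𝒮, (W true (z j) - W false (z j)) / W false (z j))
      = chiDiv 2 (W true) (W false) / 𝒮.card := by
    rw [aux_varia_eq _ _ (aux_prodCh_mass W hW _), hA]
    beta_reduce
    rw [aux_expec_scaled_sq]
    rw [show (∑ z : Fin n → 𝒵, (fun z : Fin n → 𝒵 => prodCh W n z (fun _ => false)) z
        * (∑ j ∈ 𝒮, (W true (z j) - W false (z j)) / W false (z j)) ^ 2)
      = ∑ j ∈ 𝒮, ∑ l ∈ 𝒮, (if j = l
          then chiDiv 2 (W true) (W false)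
            + (if (fun _ : Fin n => false) j then chiDiv 3 (W true) (W false) else 0)
          else (if (fun _ : Fin n => false) j then chiDiv 2 (W true) (W false) else 0)
            * (if (fun _ : Fin n => false) l then chiDiv 2 (W true) (W false) else 0))
      from aux_codeword_M2 W hW hQ0pos 𝒮 (fun _ => false)]
    simp only [Bool.false_eq_true, if_false, add_zero, mul_zero]
    rw [aux_diag_sum 𝒮 (chiDiv 2 (W true) (W false)) 0]
    field_simp
    ring
  -- mass of Qhat
  have hmassQ : ∑ z : Fin n → 𝒵, (((2:ℝ)^k)⁻¹ * ∑ v : Fin k → ZMod 2,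
      prodCh W n z (fun t => if Matrix.vecMul v G t = 1 then true else false)) = 1 := by
    calc ∑ z : Fin n → 𝒵, (((2:ℝ)^k)⁻¹ * ∑ v : Fin k → ZMod 2,
          prodCh W n z (fun t => if Matrix.vecMul v G t = 1 then true else false))
        = ∑ z : Fin n → 𝒵, (((2:ℝ)^k)⁻¹ * ∑ v : Fin k → ZMod 2,
          prodCh W n z (fun t => if Matrix.vecMul v G t = 1 then true else false)) * 1 := by
          simp
      _ = ((2:ℝ)^k)⁻¹ * ∑ v : Fin k → ZMod 2, ∑ z : Fin n → 𝒵,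
          prodCh W n z (fun t => if Matrix.vecMul v G t = 1 then true else false) * 1 :=
          aux_mix_sum _ _ _
      _ = 1 := by
          simp only [mul_one]
          rw [Finset.sum_congr rfl fun v _ => aux_prodCh_mass W hW
            (fun t => if Matrix.vecMul v G t = 1 then true else false), aux_card_vecs k,
            inv_mul_cancel₀ h2k]
  -- first moment of the unnormalized statistic under Qhat
  have hQS1 : ∑ z : Fin n → 𝒵, (((2:ℝ)^k)⁻¹ * ∑ v : Fin k → ZMod 2,
        prodCh W n z (fun t => if Matrix.vecMul v G t = 1 then true else false))
        * (∑ j ∈ 𝒮, (W true (z j) - W false (z j)) / W false (z j))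
      = (𝒮.card : ℝ) * chiDiv 2 (W true) (W false) / 2 := by
    have step2 : ∀ v : Fin k → ZMod 2, ∑ z : Fin n → 𝒵,
        prodCh W n z (fun t => if Matrix.vecMul v G t = 1 then true else false)
          * (∑ j ∈ 𝒮, (W true (z j) - W false (z j)) / W false (z j))
        = ∑ j ∈ 𝒮, chiDiv 2 (W true) (W false) * auxInd (∑ i, v i * G i j) := by
      intro v
      rw [aux_codeword_M1 W hW hQ0pos 𝒮 _]
      exact Finset.sum_congr rfl fun j _ => hindA (chiDiv 2 (W true) (W false)) v j
    calc ∑ z : Fin n → 𝒵, (((2:ℝ)^k)⁻¹ * ∑ v : Fin k → ZMod 2,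
          prodCh W n z (fun t => if Matrix.vecMul v G t = 1 then true else false))
          * (∑ j ∈ 𝒮, (W true (z j) - W false (z j)) / W false (z j))
        = ((2:ℝ)^k)⁻¹ * ∑ v : Fin k → ZMod 2, ∑ z : Fin n → 𝒵,
          prodCh W n z (fun t => if Matrix.vecMul v G t = 1 then true else false)
          * (∑ j ∈ 𝒮, (W true (z j) - W false (z j)) / W false (z j)) := aux_mix_sum _ _ _
      _ = ((2:ℝ)^k)⁻¹ * ∑ v : Fin k → ZMod 2, ∑ j ∈ 𝒮,
          chiDiv 2 (W true) (W false) * auxInd (∑ i, v i * G i j) := by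
          rw [Finset.sum_congr rfl fun v _ => step2 v]
      _ = ((2:ℝ)^k)⁻¹ * ∑ j ∈ 𝒮, ∑ v : Fin k → ZMod 2,
          chiDiv 2 (W true) (W false) * auxInd (∑ i, v i * G i j) := by
          rw [Finset.sum_comm]
      _ = ((2:ℝ)^k)⁻¹ * ∑ j ∈ 𝒮, chiDiv 2 (W true) (W false) * (2^k/2) := by
          congr 1
          refine Finset.sum_congr rfl fun j hj => ?_
          rw [← Finset.mul_sum, hcolnz j hj]
      _ = (𝒮.card : ℝ) * chiDiv 2 (W true) (W false) / 2 := by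
          rw [Finset.sum_const, nsmul_eq_mul]
          field_simp
  -- Part C : mean under Qhat
  have hC : expec (fun z : Fin n → 𝒵 => ((2:ℝ)^k)⁻¹ * ∑ v : Fin k → ZMod 2,
        prodCh W n z (fun t => if Matrix.vecMul v G t = 1 then true else false))
      (fun z => (𝒮.card : ℝ)⁻¹ * ∑ j ∈ 𝒮, (W true (z j) - W false (z j)) / W false (z j))
      = chiDiv 2 (W true) (W false) / 2 := by
    rw [aux_expec_scaled]
    beta_reduce
    rw [hQS1]
    field_simp
  -- second moment of the unnormalized statistic under Qhat
  have hQS2 : ∑ z : Fin n → 𝒵, (((2:ℝ)^k)⁻¹ * ∑ v : Fin k → ZMod 2,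
        prodCh W n z (fun t => if Matrix.vecMul v G t = 1 then true else false))
        * (∑ j ∈ 𝒮, (W true (z j) - W false (z j)) / W false (z j)) ^ 2
      = ((2:ℝ)^k)⁻¹ * ((𝒮.card : ℝ) * (2^k * chiDiv 2 (W true) (W false)
          + chiDiv 3 (W true) (W false) * (2^k/2))
        + ((𝒮.card : ℝ) * ((𝒮.card : ℝ) - 1))
          * (chiDiv 2 (W true) (W false) ^ 2 * (2^k/4))) := by
    have step2 : ∀ v : Fin k → ZMod 2, ∑ z : Fin n → 𝒵,
        prodCh W n z (fun t => if Matrix.vecMul v G t = 1 then true else false)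
          * (∑ j ∈ 𝒮, (W true (z j) - W false (z j)) / W false (z j)) ^ 2
        = ∑ j ∈ 𝒮, ∑ l ∈ 𝒮, (if j = l
            then chiDiv 2 (W true) (W false)
              + chiDiv 3 (W true) (W false) * auxInd (∑ i, v i * G i j)
            else (chiDiv 2 (W true) (W false) * auxInd (∑ i, v i * G i j))
              * (chiDiv 2 (W true) (W false) * auxInd (∑ i, v i * G i l))) := by
      intro v
      rw [aux_codeword_M2 W hW hQ0pos 𝒮 _]
      refine Finset.sum_congr rfl fun j _ => Finset.sum_congr rfl fun l _ => ?_
      by_cases hjl : j = l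
      · rw [if_pos hjl, if_pos hjl]
        exact congrArg (chiDiv 2 (W true) (W false) + ·)
          (hindA (chiDiv 3 (W true) (W false)) v j)
      · rw [if_neg hjl, if_neg hjl]
        exact congrArg₂ (· * ·) (hindA (chiDiv 2 (W true) (W false)) v j)
          (hindA (chiDiv 2 (W true) (W false)) v l)
    have inner : ∀ j ∈ 𝒮, ∀ l ∈ 𝒮, ∑ v : Fin k → ZMod 2, (if j = l
          then chiDiv 2 (W true) (W false)
            + chiDiv 3 (W true) (W false) * auxInd (∑ i, v i * G i j)
          else (chiDiv 2 (W true) (W false) * auxInd (∑ i, v i * G i j))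
            * (chiDiv 2 (W true) (W false) * auxInd (∑ i, v i * G i l)))
        = (if j = l
            then 2^k * chiDiv 2 (W true) (W false) + chiDiv 3 (W true) (W false) * (2^k/2)
            else chiDiv 2 (W true) (W false) ^ 2 * (2^k/4)) := by
      intro j hj l hl
      by_cases hjl : j = l
      · simp only [if_pos hjl]
        rw [Finset.sum_add_distrib, ← Finset.mul_sum, hcolnz j hj, hconst]
      · simp only [if_neg hjl]
        have h3 : ∀ v : Fin k → ZMod 2,
            (chiDiv 2 (W true) (W false) * auxInd (∑ i, v i * G i j))
              * (chiDiv 2 (W true) (W false) * auxInd (∑ i, v i * G i l))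
            = chiDiv 2 (W true) (W false) ^ 2
              * (auxInd (∑ i, v i * G i j) * auxInd (∑ i, v i * G i l)) := fun v => by ring
        simp_rw [h3]
        rw [← Finset.mul_sum,
          aux_sum_ind_dot_two _ _ (hnz j hj) (hnz l hl) (hdist j hj l hl hjl)]
    calc ∑ z : Fin n → 𝒵, (((2:ℝ)^k)⁻¹ * ∑ v : Fin k → ZMod 2,
          prodCh W n z (fun t => if Matrix.vecMul v G t = 1 then true else false))
          * (∑ j ∈ 𝒮, (W true (z j) - W false (z j)) / W false (z j)) ^ 2
        = ((2:ℝ)^k)⁻¹ * ∑ v : Fin k → ZMod 2, ∑ z : Fin n → 𝒵,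
          prodCh W n z (fun t => if Matrix.vecMul v G t = 1 then true else false)
          * (∑ j ∈ 𝒮, (W true (z j) - W false (z j)) / W false (z j)) ^ 2 :=
          aux_mix_sum _ _ _
      _ = ((2:ℝ)^k)⁻¹ * ∑ v : Fin k → ZMod 2, ∑ j ∈ 𝒮, ∑ l ∈ 𝒮, (if j = l
            then chiDiv 2 (W true) (W false)
              + chiDiv 3 (W true) (W false) * auxInd (∑ i, v i * G i j)
            else (chiDiv 2 (W true) (W false) * auxInd (∑ i, v i * G i j))
              * (chiDiv 2 (W true) (W false) * auxInd (∑ i, v i * G i l))) := by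
          rw [Finset.sum_congr rfl fun v _ => step2 v]
      _ = ((2:ℝ)^k)⁻¹ * ∑ j ∈ 𝒮, ∑ l ∈ 𝒮, ∑ v : Fin k → ZMod 2, (if j = l
            then chiDiv 2 (W true) (W false)
              + chiDiv 3 (W true) (W false) * auxInd (∑ i, v i * G i j)
            else (chiDiv 2 (W true) (W false) * auxInd (∑ i, v i * G i j))
              * (chiDiv 2 (W true) (W false) * auxInd (∑ i, v i * G i l))) := by
          rw [Finset.sum_comm]
          exact congrArg _ (Finset.sum_congr rfl fun j _ => Finset.sum_comm)
      _ = ((2:ℝ)^k)⁻¹ * ∑ j ∈ 𝒮, ∑ l ∈ 𝒮, (if j = l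
            then 2^k * chiDiv 2 (W true) (W false) + chiDiv 3 (W true) (W false) * (2^k/2)
            else chiDiv 2 (W true) (W false) ^ 2 * (2^k/4)) := by
          rw [Finset.sum_congr rfl fun j hj => Finset.sum_congr rfl fun l hl => inner j hj l hl]
      _ = ((2:ℝ)^k)⁻¹ * ((𝒮.card : ℝ) * (2^k * chiDiv 2 (W true) (W false)
            + chiDiv 3 (W true) (W false) * (2^k/2))
          + ((𝒮.card : ℝ) * ((𝒮.card : ℝ) - 1))
            * (chiDiv 2 (W true) (W false) ^ 2 * (2^k/4))) := by
          rw [aux_diag_sum]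
  -- Part D : variance under Qhat
  have hD : varia (fun z : Fin n → 𝒵 => ((2:ℝ)^k)⁻¹ * ∑ v : Fin k → ZMod 2,
        prodCh W n z (fun t => if Matrix.vecMul v G t = 1 then true else false))
      (fun z => (𝒮.card : ℝ)⁻¹ * ∑ j ∈ 𝒮, (W true (z j) - W false (z j)) / W false (z j))
      = (𝒮.card : ℝ)⁻¹ * (chiDiv 2 (W true) (W false)
        + chiDiv 3 (W true) (W false) / 2 - (chiDiv 2 (W true) (W false))^2 / 4) := by
    rw [aux_varia_eq _ _ hmassQ, hC]
    beta_reduce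
    rw [aux_expec_scaled_sq]
    beta_reduce
    rw [hQS2]
    field_simp
    ring
  exact ⟨hA, hB, hC, hD⟩
end

section
/- Let X_1,…,X_q be mutually independent finitely-valued random variables and let Ỹ be any finitely-valued random variable on the same finite probability space. Then for every S ⊆ {1,…,q}: Σ_{i∈S} I(X_i; Ỹ | X_{i+1:q}) ≤ I(X_S; Ỹ | X_{S^c}), where X_{i+1:q} = (X_{i+1},…,X_q), X_S = (X_i)_{i∈S}, and X_{S^c} = (X_i)_{i∉S}. -/
open Finset

/-- Pmf of the random variable `T` under the pmf `p` on a finite space. -/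
noncomputable def pmOf {Ω D : Type} [Fintype Ω] [DecidableEq D]
    (p : Ω → ℝ) (T : Ω → D) (d : D) : ℝ :=
  ∑ ω, if T ω = d then p ω else 0

/-- Shannon entropy of the random variable `T` under `p`. -/
noncomputable def ent {Ω D : Type} [Fintype Ω] [Fintype D] [DecidableEq D]
    (p : Ω → ℝ) (T : Ω → D) : ℝ :=
  ∑ d, Real.negMulLog (pmOf p T d)

/-- Conditional mutual information `I(U;V|Wc) = H(U,Wc)+H(V,Wc)−H(U,V,Wc)−H(Wc)`. -/
noncomputable def condMI {Ω A B C : Type} [Fintype Ω] [Fintype A] [Fintype B] [Fintype C]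
    [DecidableEq A] [DecidableEq B] [DecidableEq C]
    (p : Ω → ℝ) (U : Ω → A) (V : Ω → B) (Wc : Ω → C) : ℝ :=
  ent p (fun ω => (U ω, Wc ω)) + ent p (fun ω => (V ω, Wc ω))
    - ent p (fun ω => (U ω, V ω, Wc ω)) - ent p Wc

section Aux

variable {Ω : Type} [Fintype Ω] {p : Ω → ℝ}

lemma pmOf_nonneg (hp : ∀ ω, 0 ≤ p ω) {D : Type} [DecidableEq D] (T : Ω → D) (d : D) :
    0 ≤ pmOf p T d :=
  Finset.sum_nonneg fun ω _ => by split <;> simp [hp ω]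

lemma sum_pmOf {D : Type} [Fintype D] [DecidableEq D] (T : Ω → D) :
    ∑ d, pmOf p T d = ∑ ω, p ω := by
  unfold pmOf
  rw [Finset.sum_comm]
  exact Finset.sum_congr rfl fun ω _ => by simp

lemma pmOf_congr {D E : Type} [DecidableEq D] [DecidableEq E] {T : Ω → D} {T' : Ω → E}
    {d : D} {e : E} (h : ∀ ω, T ω = d ↔ T' ω = e) : pmOf p T d = pmOf p T' e :=
  Finset.sum_congr rfl fun ω _ => by
    by_cases hh : T ω = d
    · rw [if_pos hh, if_pos ((h ω).mp hh)]
    · rw [if_neg hh, if_neg fun c => hh ((h ω).mpr c)]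

lemma ent_comp_equiv {D E : Type} [Fintype D] [Fintype E] [DecidableEq D] [DecidableEq E]
    (T : Ω → D) (e : D ≃ E) : ent p (fun ω => e (T ω)) = ent p T := by
  unfold ent
  rw [← Equiv.sum_comp e (fun y => Real.negMulLog (pmOf p (fun ω => e (T ω)) y))]
  refine Finset.sum_congr rfl fun d _ => ?_
  congr 1
  exact pmOf_congr fun ω => by simp

lemma ent_pair_fst {D E : Type} [Fintype D] [Fintype E] [DecidableEq D] [DecidableEq E]
    (T : Ω → D) (T' : Ω → E) (f : D → E) (h : ∀ ω, f (T ω) = T' ω) :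
    ent p (fun ω => (T ω, T' ω)) = ent p T := by
  unfold ent
  rw [Fintype.sum_prod_type]
  refine Finset.sum_congr rfl fun d _ => ?_
  have key : ∀ e, pmOf p (fun ω => (T ω, T' ω)) (d, e) = if f d = e then pmOf p T d else 0 := by
    intro e
    by_cases hf : f d = e
    · rw [if_pos hf]
      exact pmOf_congr fun ω => by
        constructor
        · intro c
          exact (Prod.ext_iff.mp c).1
        · intro c
          rw [Prod.ext_iff]
          exact ⟨c, by rw [← hf, ← c]; exact (h ω).symm⟩
    · rw [if_neg hf]
      refine Finset.sum_eq_zero fun ω _ => ?_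
      rw [if_neg]
      intro c
      injection c with c1 c2
      exact hf (by rw [← c1, h ω, c2])
  simp [key, apply_ite Real.negMulLog]

lemma ent_congr {D E : Type} [Fintype D] [Fintype E] [DecidableEq D] [DecidableEq E]
    (T : Ω → D) (T' : Ω → E) (f : D → E) (g : E → D)
    (h1 : ∀ ω, f (T ω) = T' ω) (h2 : ∀ ω, g (T' ω) = T ω) : ent p T = ent p T' := by
  have e1 := ent_pair_fst (p := p) T T' f h1
  have e2 := ent_pair_fst (p := p) T' T g h2
  have e3 : ent p (fun ω => (T ω, T' ω)) = ent p (fun ω => (T' ω, T ω)) :=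
    (ent_comp_equiv (fun ω => (T ω, T' ω)) (Equiv.prodComm D E)).symm
  rw [← e1, e3, e2]

lemma ent_pair_of_indep {D E : Type} [Fintype D] [Fintype E] [DecidableEq D] [DecidableEq E]
    (U : Ω → D) (V : Ω → E)
    (hU : ∑ d, pmOf p U d = 1) (hV : ∑ e, pmOf p V e = 1)
    (hmul : ∀ d e, pmOf p (fun ω => (U ω, V ω)) (d, e) = pmOf p U d * pmOf p V e) :
    ent p (fun ω => (U ω, V ω)) = ent p U + ent p V := by
  unfold ent
  rw [Fintype.sum_prod_type]
  have key : ∀ d e, Real.negMulLog (pmOf p (fun ω => (U ω, V ω)) (d, e))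
      = pmOf p V e * Real.negMulLog (pmOf p U d) + pmOf p U d * Real.negMulLog (pmOf p V e) := by
    intro d e; rw [hmul, Real.negMulLog_mul]
  simp_rw [key, Finset.sum_add_distrib, ← Finset.sum_mul, ← Finset.mul_sum, hV]
  rw [← Finset.sum_mul, hU]
  ring

end Aux
section Gibbs

variable {Ω : Type} [Fintype Ω] {p : Ω → ℝ}

lemma neg_sum_mul {ι : Type} [Fintype ι] (w : ι → ℝ) (L : ℝ) :
    -((∑ b, w b) * L) = ∑ b, -(w b * L) := by
  rw [Finset.sum_mul, ← Finset.sum_neg_distrib]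

lemma negMulLog_sum {ι : Type} [Fintype ι] (w : ι → ℝ) :
    Real.negMulLog (∑ b, w b) = ∑ b, -(w b * Real.log (∑ b', w b')) := by
  rw [Real.negMulLog, neg_mul, neg_sum_mul]

lemma key_pt {f g1 g2 h : ℝ} (hf : 0 ≤ f) (h1 : f ≤ g1) (h2 : f ≤ g2) (h3 : g1 ≤ h) :
    f - g1 * g2 / h ≤ f * Real.log f + f * Real.log h - f * Real.log g1 - f * Real.log g2 := by
  rcases hf.eq_or_lt with hf0 | hf0
  · have hg1 : 0 ≤ g1 := hf0 ▸ h1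
    have hg2 : 0 ≤ g2 := hf0 ▸ h2
    have hh : 0 ≤ h := le_trans hg1 h3
    rw [← hf0]
    have : 0 ≤ g1 * g2 / h := div_nonneg (mul_nonneg hg1 hg2) hh
    simp only [zero_mul, sub_zero, zero_sub, add_zero, zero_add]
    linarith
  · have hg1 : 0 < g1 := lt_of_lt_of_le hf0 h1
    have hg2 : 0 < g2 := lt_of_lt_of_le hf0 h2
    have hh : 0 < h := lt_of_lt_of_le hg1 h3
    have hm : 0 < g1 * g2 / h := div_pos (mul_pos hg1 hg2) hh
    have key := Real.log_le_sub_one_of_pos (div_pos hm hf0)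
    rw [Real.log_div hm.ne' hf0.ne', Real.log_div (mul_pos hg1 hg2).ne' hh.ne',
      Real.log_mul hg1.ne' hg2.ne'] at key
    have h4 : f * (Real.log g1 + Real.log g2 - Real.log h - Real.log f)
        ≤ f * (g1 * g2 / h / f - 1) :=
      mul_le_mul_of_nonneg_left (by linarith) hf
    have h5 : f * (g1 * g2 / h / f - 1) = g1 * g2 / h - f := by
      field_simp
    nlinarith [h4, h5]

lemma gibbs_core {A B C : Type} [Fintype A] [Fintype B] [Fintype C] (f : A → B → C → ℝ)
    (hf : ∀ a b c, 0 ≤ f a b c) :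
    0 ≤ ∑ c : C, ∑ a : A, ∑ b : B,
      (f a b c * Real.log (f a b c) + f a b c * Real.log (∑ a', ∑ b', f a' b' c)
        - f a b c * Real.log (∑ b', f a b' c) - f a b c * Real.log (∑ a', f a' b c)) := by
  have hg1 : ∀ a b c, f a b c ≤ ∑ b', f a b' c := fun a b c =>
    Finset.single_le_sum (fun b' _ => hf a b' c) (Finset.mem_univ b)
  have hg2 : ∀ a b c, f a b c ≤ ∑ a', f a' b c := fun a b c =>
    Finset.single_le_sum (fun a' _ => hf a' b c) (Finset.mem_univ a)
  have hg1h : ∀ a c, (∑ b', f a b' c) ≤ ∑ a', ∑ b', f a' b' c := fun a c =>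
    Finset.single_le_sum (fun a' _ => Finset.sum_nonneg fun b' _ => hf a' b' c)
      (Finset.mem_univ a)
  have main : ∀ c a b,
      f a b c - (∑ b', f a b' c) * (∑ a', f a' b c) / (∑ a', ∑ b', f a' b' c)
        ≤ f a b c * Real.log (f a b c) + f a b c * Real.log (∑ a', ∑ b', f a' b' c)
          - f a b c * Real.log (∑ b', f a b' c) - f a b c * Real.log (∑ a', f a' b c) :=
    fun c a b => key_pt (hf a b c) (hg1 a b c) (hg2 a b c) (hg1h a c)
  have step1 : ∀ c, (∑ a, ∑ b,
      (f a b c - (∑ b', f a b' c) * (∑ a', f a' b c) / (∑ a', ∑ b', f a' b' c))) = 0 := by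
    intro c
    simp only [Finset.sum_sub_distrib]
    have hm2 : ∀ a, (∑ b, ((∑ b', f a b' c) * (∑ a', f a' b c) / (∑ a', ∑ b', f a' b' c)))
        = (∑ b', f a b' c) * (∑ a', ∑ b', f a' b' c) / (∑ a', ∑ b', f a' b' c) := by
      intro a
      rw [← Finset.sum_div, ← Finset.mul_sum]
      congr 2
      exact Finset.sum_comm
    simp only [hm2]
    rw [← Finset.sum_div, ← Finset.sum_mul]
    by_cases h0 : (∑ a', ∑ b', f a' b' c) = 0
    · simp [h0]
    · rw [mul_div_assoc, div_self h0, mul_one, sub_self]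
  calc (0:ℝ) = ∑ c : C, (0:ℝ) := by simp
    _ = ∑ c : C, ∑ a, ∑ b,
        (f a b c - (∑ b', f a b' c) * (∑ a', f a' b c) / (∑ a', ∑ b', f a' b' c)) :=
      (Finset.sum_congr rfl fun c _ => (step1 c).symm)
    _ ≤ _ := Finset.sum_le_sum fun c _ => Finset.sum_le_sum fun a _ =>
        Finset.sum_le_sum fun b _ => main c a b

lemma pmOf_fst_thd {A B C : Type} [Fintype A] [Fintype B] [Fintype C]
    [DecidableEq A] [DecidableEq B] [DecidableEq C]
    (U : Ω → A) (V : Ω → B) (W : Ω → C) (a : A) (c : C) :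
    pmOf p (fun ω => (U ω, W ω)) (a, c)
      = ∑ b, pmOf p (fun ω => (U ω, V ω, W ω)) (a, b, c) := by
  unfold pmOf
  rw [Finset.sum_comm]
  refine Finset.sum_congr rfl fun ω _ => ?_
  by_cases h1 : U ω = a <;> by_cases h3 : W ω = c <;> simp [Prod.ext_iff, h1, h3]

lemma pmOf_snd_thd {A B C : Type} [Fintype A] [Fintype B] [Fintype C]
    [DecidableEq A] [DecidableEq B] [DecidableEq C]
    (U : Ω → A) (V : Ω → B) (W : Ω → C) (b : B) (c : C) :
    pmOf p (fun ω => (V ω, W ω)) (b, c)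
      = ∑ a, pmOf p (fun ω => (U ω, V ω, W ω)) (a, b, c) := by
  unfold pmOf
  rw [Finset.sum_comm]
  refine Finset.sum_congr rfl fun ω _ => ?_
  by_cases h1 : V ω = b <;> by_cases h3 : W ω = c <;> simp [Prod.ext_iff, h1, h3]

lemma pmOf_thd {A B C : Type} [Fintype A] [Fintype B] [Fintype C]
    [DecidableEq A] [DecidableEq B] [DecidableEq C]
    (U : Ω → A) (V : Ω → B) (W : Ω → C) (c : C) :
    pmOf p W c = ∑ a, ∑ b, pmOf p (fun ω => (U ω, V ω, W ω)) (a, b, c) := by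
  unfold pmOf
  symm
  calc ∑ a, ∑ b, ∑ ω, (if (U ω, V ω, W ω) = (a, b, c) then p ω else 0)
      = ∑ a, ∑ ω, ∑ b, (if (U ω, V ω, W ω) = (a, b, c) then p ω else 0) :=
        Finset.sum_congr rfl fun a _ => Finset.sum_comm
    _ = ∑ ω, ∑ a, ∑ b, (if (U ω, V ω, W ω) = (a, b, c) then p ω else 0) := Finset.sum_comm
    _ = ∑ ω, (if W ω = c then p ω else 0) := Finset.sum_congr rfl fun ω _ => by
        by_cases h3 : W ω = c <;> simp [Prod.ext_iff, h3, ite_and, Finset.sum_ite_eq]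

lemma condMI_nonneg {A B C : Type} [Fintype A] [Fintype B] [Fintype C]
    [DecidableEq A] [DecidableEq B] [DecidableEq C]
    (hp : ∀ ω, 0 ≤ p ω) (U : Ω → A) (V : Ω → B) (W : Ω → C) :
    0 ≤ condMI p U V W := by
  classical
  have eq1 : ent p (fun ω => (U ω, W ω)) = ∑ c : C, ∑ a : A, ∑ b : B,
      -(pmOf p (fun ω => (U ω, V ω, W ω)) (a, b, c)
        * Real.log (∑ b', pmOf p (fun ω => (U ω, V ω, W ω)) (a, b', c))) := by
    unfold ent
    rw [Fintype.sum_prod_type, Finset.sum_comm]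
    refine Finset.sum_congr rfl fun c _ => Finset.sum_congr rfl fun a _ => ?_
    rw [pmOf_fst_thd U V W a c, negMulLog_sum]
  have eq2 : ent p (fun ω => (V ω, W ω)) = ∑ c : C, ∑ a : A, ∑ b : B,
      -(pmOf p (fun ω => (U ω, V ω, W ω)) (a, b, c)
        * Real.log (∑ a', pmOf p (fun ω => (U ω, V ω, W ω)) (a', b, c))) := by
    unfold ent
    rw [Fintype.sum_prod_type, Finset.sum_comm]
    refine Finset.sum_congr rfl fun c _ => ?_
    rw [show (∑ b, Real.negMulLog (pmOf p (fun ω => (V ω, W ω)) (b, c)))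
        = ∑ b : B, ∑ a : A,
          -(pmOf p (fun ω => (U ω, V ω, W ω)) (a, b, c)
            * Real.log (∑ a', pmOf p (fun ω => (U ω, V ω, W ω)) (a', b, c))) from
      Finset.sum_congr rfl fun b _ => by rw [pmOf_snd_thd U V W b c, negMulLog_sum]]
    exact Finset.sum_comm
  have eq3 : ent p (fun ω => (U ω, V ω, W ω)) = ∑ c : C, ∑ a : A, ∑ b : B,
      Real.negMulLog (pmOf p (fun ω => (U ω, V ω, W ω)) (a, b, c)) := by
    unfold ent
    rw [Fintype.sum_prod_type]
    rw [show (∑ a : A, ∑ x : B × C, Real.negMulLog (pmOf p (fun ω => (U ω, V ω, W ω)) (a, x)))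
        = ∑ a : A, ∑ c : C, ∑ b : B,
          Real.negMulLog (pmOf p (fun ω => (U ω, V ω, W ω)) (a, b, c)) from
      Finset.sum_congr rfl fun a _ => by rw [Fintype.sum_prod_type]; exact Finset.sum_comm]
    exact Finset.sum_comm
  have eq4 : ent p W = ∑ c : C, ∑ a : A, ∑ b : B,
      -(pmOf p (fun ω => (U ω, V ω, W ω)) (a, b, c)
        * Real.log (∑ a', ∑ b', pmOf p (fun ω => (U ω, V ω, W ω)) (a', b', c))) := by
    unfold ent
    refine Finset.sum_congr rfl fun c _ => ?_
    rw [pmOf_thd U V W c, negMulLog_sum]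
    exact Finset.sum_congr rfl fun a _ => neg_sum_mul _ _
  have comb : condMI p U V W = ∑ c : C, ∑ a : A, ∑ b : B,
      (pmOf p (fun ω => (U ω, V ω, W ω)) (a, b, c)
          * Real.log (pmOf p (fun ω => (U ω, V ω, W ω)) (a, b, c))
        + pmOf p (fun ω => (U ω, V ω, W ω)) (a, b, c)
          * Real.log (∑ a', ∑ b', pmOf p (fun ω => (U ω, V ω, W ω)) (a', b', c))
        - pmOf p (fun ω => (U ω, V ω, W ω)) (a, b, c)
          * Real.log (∑ b', pmOf p (fun ω => (U ω, V ω, W ω)) (a, b', c))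
        - pmOf p (fun ω => (U ω, V ω, W ω)) (a, b, c)
          * Real.log (∑ a', pmOf p (fun ω => (U ω, V ω, W ω)) (a', b, c))) := by
    unfold condMI
    rw [eq1, eq2, eq3, eq4]
    simp only [← Finset.sum_add_distrib, ← Finset.sum_sub_distrib]
    refine Finset.sum_congr rfl fun c _ => Finset.sum_congr rfl fun a _ =>
      Finset.sum_congr rfl fun b _ => ?_
    simp only [Real.negMulLog]
    ring
  rw [comb]
  exact gibbs_core _ (fun a b c => pmOf_nonneg hp _ _)

end Gibbs
section Main

variable {Ω : Type} [Fintype Ω] {q : ℕ} {𝒳 : Fin q → Type}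
  [∀ i, Fintype (𝒳 i)] [∀ i, DecidableEq (𝒳 i)]
  {B : Type} [Fintype B] [DecidableEq B]
  {p : Ω → ℝ}

def XF (X : ∀ i, Ω → 𝒳 i) (A : Finset (Fin q)) : Ω → (∀ t : {t : Fin q // t ∈ A}, 𝒳 t.1) :=
  fun ω t => X t.1 ω

lemma univ_eq_attach_mem {α : Type} [Fintype α] [DecidableEq α] (s : Finset α) :
    (Finset.univ : Finset {x : α // x ∈ s}) = s.attach := by
  ext t; simp

lemma prod_subtype_insert {α : Type} {M : Type} [DecidableEq α] [Fintype α] [CommMonoid M]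
    {i : α} {C : Finset α} (hiC : i ∉ C) (F : {t : α // t ∈ insert i C} → M) :
    ∏ t : {t : α // t ∈ insert i C}, F t
      = F ⟨i, Finset.mem_insert_self i C⟩
        * ∏ t : {t : α // t ∈ C}, F ⟨t.1, Finset.mem_insert_of_mem t.2⟩ := by
  rw [univ_eq_attach_mem, univ_eq_attach_mem, Finset.attach_insert,
    Finset.prod_insert (by
      simp only [Finset.mem_image, Finset.mem_attach, true_and, not_exists]
      intro x hx
      have hxi : (x : α) = i := congrArg Subtype.val hx
      exact hiC (hxi ▸ x.2)),
    Finset.prod_image (by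
      intro x _ y _ hxy
      have h' : (x : α) = (y : α) := Subtype.mk_eq_mk.mp hxy
      exact Subtype.ext h')]

lemma pmOf_XF (hp1 : ∑ ω, p ω = 1) (X : ∀ i, Ω → 𝒳 i)
    (hind : ∀ x : ∀ i, 𝒳 i,
      pmOf p (fun ω => fun i => X i ω) x = ∏ i, pmOf p (X i) (x i))
    (A : Finset (Fin q)) (g : ∀ t : {t : Fin q // t ∈ A}, 𝒳 t.1) :
    pmOf p (XF X A) g = ∏ t : {t : Fin q // t ∈ A}, pmOf p (X t.1) (g t) := by
  classical
  have collapse : ∀ ω : Ω, (∑ z : ∀ i, 𝒳 i,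
        if (fun t : {t : Fin q // t ∈ A} => z t.1) = g
          then (if (fun i => X i ω) = z then p ω else 0) else 0)
      = if (fun t : {t : Fin q // t ∈ A} => X t.1 ω) = g then p ω else 0 := by
    intro ω
    rw [Finset.sum_eq_single (fun i => X i ω)]
    · by_cases hc : (fun t : {t : Fin q // t ∈ A} => X t.1 ω) = g
      · rw [if_pos hc, if_pos rfl, if_pos hc]
      · rw [if_neg hc, if_neg hc]
    · intro z _ hz
      split
      · exact if_neg fun h => hz h.symm
      · rfl
    · intro h
      exact absurd (Finset.mem_univ _) h
  have step1 : pmOf p (XF X A) g = ∑ z : ∀ i, 𝒳 i,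
      if (fun t : {t : Fin q // t ∈ A} => z t.1) = g
        then pmOf p (fun ω => fun i => X i ω) z else 0 := by
    unfold pmOf
    rw [show (∑ z : ∀ i, 𝒳 i, if (fun t : {t : Fin q // t ∈ A} => z t.1) = g
          then (∑ ω, if (fun i => X i ω) = z then p ω else 0) else 0)
        = ∑ z : ∀ i, 𝒳 i, ∑ ω, (if (fun t : {t : Fin q // t ∈ A} => z t.1) = g
            then (if (fun i => X i ω) = z then p ω else 0) else 0) from
      Finset.sum_congr rfl fun z _ => by split <;> simp]
    rw [Finset.sum_comm]
    exact (Finset.sum_congr rfl fun ω _ => (collapse ω)).symm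
  rw [step1]
  simp_rw [hind]
  set F : ∀ i : Fin q, 𝒳 i → ℝ := fun i x =>
    if h : i ∈ A then (if x = g ⟨i, h⟩ then pmOf p (X i) x else 0) else pmOf p (X i) x
    with hF
  have step3 : ∀ z : ∀ i, 𝒳 i,
      (if (fun t : {t : Fin q // t ∈ A} => z t.1) = g then ∏ i, pmOf p (X i) (z i) else 0)
      = ∏ i, F i (z i) := by
    intro z
    by_cases hc : (fun t : {t : Fin q // t ∈ A} => z t.1) = g
    · rw [if_pos hc]
      refine Finset.prod_congr rfl fun i _ => ?_
      simp only [hF]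
      split
      · rename_i hiA
        rw [if_pos (congrFun hc ⟨i, hiA⟩)]
      · rfl
    · rw [if_neg hc]
      have hex : ∃ t : {t : Fin q // t ∈ A}, z t.1 ≠ g t := by
        by_contra hall
        push_neg at hall
        exact hc (funext hall)
      obtain ⟨t, ht⟩ := hex
      refine (Finset.prod_eq_zero (Finset.mem_univ t.1) ?_).symm
      simp only [hF]
      rw [dif_pos t.2, if_neg]
      intro hh
      exact ht hh
  simp_rw [step3]
  rw [← Fintype.piFinset_univ, ← Finset.prod_univ_sum]
  have step5 : ∀ i : Fin q, (∑ x : 𝒳 i, F i x)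
      = if h : i ∈ A then pmOf p (X i) (g ⟨i, h⟩) else 1 := by
    intro i
    simp only [hF]
    by_cases h : i ∈ A
    · simp [h]
    · simp only [dif_neg h]
      rw [sum_pmOf, hp1]
  simp_rw [step5]
  calc ∏ i : Fin q, (if h : i ∈ A then pmOf p (X i) (g ⟨i, h⟩) else 1)
      = ∏ i ∈ A, (if h : i ∈ A then pmOf p (X i) (g ⟨i, h⟩) else 1) :=
        (Finset.prod_subset (Finset.subset_univ A) (fun x _ hx => dif_neg hx)).symm
    _ = ∏ t ∈ A.attach, (if h : t.1 ∈ A then pmOf p (X t.1) (g ⟨t.1, h⟩) else 1) :=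
        (Finset.prod_attach A _).symm
    _ = ∏ t : {t : Fin q // t ∈ A}, pmOf p (X t.1) (g t) := by
        rw [univ_eq_attach_mem A]
        refine Finset.prod_congr rfl fun t _ => ?_
        rw [dif_pos t.2]

def extFun {i : Fin q} {C : Finset (Fin q)} (x : 𝒳 i)
    (g : ∀ t : {t : Fin q // t ∈ C}, 𝒳 t.1) :
    ∀ t : {t : Fin q // t ∈ insert i C}, 𝒳 t.1 :=
  fun t => if h : t.1 ∈ C then g ⟨t.1, h⟩
    else cast (congrArg 𝒳 (Or.resolve_right (Finset.mem_insert.mp t.2) h).symm) x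

lemma castX {a b : Fin q} (h : a = b) (X : ∀ i, Ω → 𝒳 i) (ω : Ω) :
    cast (congrArg 𝒳 h) (X a ω) = X b ω := by
  subst h
  exact cast_eq _ _

lemma extFun_spec (X : ∀ i, Ω → 𝒳 i) {i : Fin q} {C : Finset (Fin q)} (ω : Ω) :
    extFun (X i ω) (XF X C ω) = XF X (insert i C) ω := by
  funext t
  simp only [extFun, XF]
  split
  · rfl
  · rename_i h
    have hi : t.1 = i := Or.resolve_right (Finset.mem_insert.mp t.2) h
    exact castX hi.symm X ω

lemma extFun_fst {i : Fin q} {C : Finset (Fin q)} (hiC : i ∉ C) (x : 𝒳 i)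
    (g : ∀ t : {t : Fin q // t ∈ C}, 𝒳 t.1) :
    extFun x g ⟨i, Finset.mem_insert_self i C⟩ = x := by
  simp only [extFun]
  rw [dif_neg hiC]
  exact cast_eq _ _

lemma extFun_mem {i : Fin q} {C : Finset (Fin q)} (x : 𝒳 i)
    (g : ∀ t : {t : Fin q // t ∈ C}, 𝒳 t.1) (t : {t : Fin q // t ∈ C}) :
    extFun x g ⟨t.1, Finset.mem_insert_of_mem t.2⟩ = g t := by
  simp only [extFun]
  rw [dif_pos t.2]

def mergeFun {A Bs : Finset (Fin q)} (hAB : A ⊆ Bs)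
    (g' : ∀ t : {t : Fin q // t ∈ Bs \ A}, 𝒳 t.1)
    (g : ∀ t : {t : Fin q // t ∈ A}, 𝒳 t.1) :
    ∀ t : {t : Fin q // t ∈ Bs}, 𝒳 t.1 :=
  fun t => if h : t.1 ∈ A then g ⟨t.1, h⟩ else g' ⟨t.1, Finset.mem_sdiff.mpr ⟨t.2, h⟩⟩

lemma mergeFun_spec (X : ∀ i, Ω → 𝒳 i) {A Bs : Finset (Fin q)} (hAB : A ⊆ Bs) (ω : Ω) :
    mergeFun hAB (XF X (Bs \ A) ω) (XF X A ω) = XF X Bs ω := by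
  funext t
  simp only [mergeFun, XF]
  split <;> rfl

noncomputable def EE (p : Ω → ℝ) (X : ∀ i, Ω → 𝒳 i) (A : Finset (Fin q)) : ℝ :=
  ent p (XF X A)

noncomputable def EEY (p : Ω → ℝ) (X : ∀ i, Ω → 𝒳 i) (Y : Ω → B) (A : Finset (Fin q)) : ℝ :=
  ent p (fun ω => (XF X A ω, Y ω))

lemma ent_pairXi (X : ∀ i, Ω → 𝒳 i) {i : Fin q} {C : Finset (Fin q)} :
    ent p (fun ω => (X i ω, XF X C ω)) = EE p X (insert i C) :=
  ent_congr _ _ (fun z => extFun z.1 z.2)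
    (fun G => (G ⟨i, Finset.mem_insert_self i C⟩,
      fun t => G ⟨t.1, Finset.mem_insert_of_mem t.2⟩))
    (fun ω => extFun_spec X ω) (fun ω => rfl)

lemma EE_insert (hp1 : ∑ ω, p ω = 1) (X : ∀ i, Ω → 𝒳 i)
    (hind : ∀ x : ∀ i, 𝒳 i,
      pmOf p (fun ω => fun i => X i ω) x = ∏ i, pmOf p (X i) (x i))
    {i : Fin q} {C : Finset (Fin q)} (hiC : i ∉ C) :
    EE p X (insert i C) = ent p (X i) + EE p X C := by
  rw [← ent_pairXi X]
  have hmul : ∀ (x : 𝒳 i) (g : ∀ t : {t : Fin q // t ∈ C}, 𝒳 t.1),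
      pmOf p (fun ω => (X i ω, XF X C ω)) (x, g)
        = pmOf p (X i) x * pmOf p (XF X C) g := by
    intro x g
    have h1 : pmOf p (fun ω => (X i ω, XF X C ω)) (x, g)
        = pmOf p (XF X (insert i C)) (extFun x g) := by
      refine pmOf_congr fun ω => ?_
      constructor
      · intro c
        injection c with c1 c2
        rw [← c1, ← c2]
        exact (extFun_spec X ω).symm
      · intro c
        have e1 : X i ω = x := by
          rw [show X i ω = XF X (insert i C) ω ⟨i, Finset.mem_insert_self i C⟩ from rfl, c]
          exact extFun_fst hiC x g
        have e2 : XF X C ω = g := by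
          funext t
          rw [show XF X C ω t
              = XF X (insert i C) ω ⟨t.1, Finset.mem_insert_of_mem t.2⟩ from rfl, c]
          exact extFun_mem x g t
        rw [Prod.ext_iff]
        exact ⟨e1, e2⟩
    rw [h1, pmOf_XF hp1 X hind, prod_subtype_insert hiC]
    congr 1
    · exact congrArg _ (extFun_fst hiC x g)
    · rw [pmOf_XF hp1 X hind]
      exact Finset.prod_congr rfl fun t _ => congrArg _ (extFun_mem x g t)
  exact ent_pair_of_indep (X i) (XF X C)
    (by rw [sum_pmOf, hp1]) (by rw [sum_pmOf, hp1]) hmul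

lemma Kstep (hp : ∀ ω, 0 ≤ p ω) (hp1 : ∑ ω, p ω = 1)
    (X : ∀ i, Ω → 𝒳 i) (Y : Ω → B)
    (hind : ∀ x : ∀ i, 𝒳 i,
      pmOf p (fun ω => fun i => X i ω) x = ∏ i, pmOf p (X i) (x i))
    {A Bs : Finset (Fin q)} (hAB : A ⊆ Bs) {i : Fin q} (hiB : i ∉ Bs) :
    (EEY p X Y A - EE p X A) - (EEY p X Y (insert i A) - EE p X (insert i A))
      ≤ (EEY p X Y Bs - EE p X Bs) - (EEY p X Y (insert i Bs) - EE p X (insert i Bs)) := by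
  have hiA : i ∉ A := fun h => hiB (hAB h)
  have h0 : 0 ≤ condMI p (X i) (XF X (Bs \ A)) (fun ω => (XF X A ω, Y ω)) :=
    condMI_nonneg hp _ _ _
  have c1 : ent p (fun ω => (X i ω, XF X A ω, Y ω)) = EEY p X Y (insert i A) :=
    ent_congr _ _
      (fun z => (extFun z.1 z.2.1, z.2.2))
      (fun z => (z.1 ⟨i, Finset.mem_insert_self i A⟩,
        (fun t => z.1 ⟨t.1, Finset.mem_insert_of_mem t.2⟩, z.2)))
      (fun ω => by
        show (extFun (X i ω) (XF X A ω), Y ω) = (XF X (insert i A) ω, Y ω)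
        rw [extFun_spec X ω])
      (fun ω => rfl)
  have c2 : ent p (fun ω => (XF X (Bs \ A) ω, XF X A ω, Y ω)) = EEY p X Y Bs :=
    ent_congr _ _
      (fun z => (mergeFun hAB z.1 z.2.1, z.2.2))
      (fun z => ((fun t => z.1 ⟨t.1, (Finset.mem_sdiff.mp t.2).1⟩),
        ((fun t => z.1 ⟨t.1, hAB t.2⟩), z.2)))
      (fun ω => by
        show (mergeFun hAB (XF X (Bs \ A) ω) (XF X A ω), Y ω) = (XF X Bs ω, Y ω)
        rw [mergeFun_spec X hAB ω])
      (fun ω => rfl)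
  have c3 : ent p (fun ω => (X i ω, XF X (Bs \ A) ω, XF X A ω, Y ω))
      = EEY p X Y (insert i Bs) :=
    ent_congr _ _
      (fun z => (extFun z.1 (mergeFun hAB z.2.1 z.2.2.1), z.2.2.2))
      (fun z => (z.1 ⟨i, Finset.mem_insert_self i Bs⟩,
        ((fun t => z.1 ⟨t.1, Finset.mem_insert_of_mem (Finset.mem_sdiff.mp t.2).1⟩),
         ((fun t => z.1 ⟨t.1, Finset.mem_insert_of_mem (hAB t.2)⟩), z.2))))
      (fun ω => by
        show (extFun (X i ω) (mergeFun hAB (XF X (Bs \ A) ω) (XF X A ω)), Y ω)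
            = (XF X (insert i Bs) ω, Y ω)
        rw [mergeFun_spec X hAB ω, extFun_spec X ω])
      (fun ω => rfl)
  have hcmi : condMI p (X i) (XF X (Bs \ A)) (fun ω => (XF X A ω, Y ω))
      = EEY p X Y (insert i A) + EEY p X Y Bs
        - EEY p X Y (insert i Bs) - EEY p X Y A := by
    simp only [condMI]
    rw [c1, c2, c3]
    rfl
  rw [hcmi] at h0
  have e1 : EE p X (insert i A) = ent p (X i) + EE p X A := EE_insert hp1 X hind hiA
  have e2 : EE p X (insert i Bs) = ent p (X i) + EE p X Bs := EE_insert hp1 X hind hiB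
  linarith [h0, e1, e2]

end Main
section Final

variable {Ω : Type} [Fintype Ω] {q : ℕ} {𝒳 : Fin q → Type}
  [∀ i, Fintype (𝒳 i)] [∀ i, DecidableEq (𝒳 i)]
  {B : Type} [Fintype B] [DecidableEq B]
  {p : Ω → ℝ}

lemma lhs_eq (X : ∀ i, Ω → 𝒳 i) (Y : Ω → B) (i : Fin q) :
    condMI p (X i) Y (fun ω => fun t : {t : Fin q // i < t} => X t ω)
      = (EEY p X Y (Finset.filter (fun t => i < t) Finset.univ)
          - EE p X (Finset.filter (fun t => i < t) Finset.univ))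
        - (EEY p X Y (insert i (Finset.filter (fun t => i < t) Finset.univ))
          - EE p X (insert i (Finset.filter (fun t => i < t) Finset.univ))) := by
  set Ai := Finset.filter (fun t => i < t) (Finset.univ : Finset (Fin q)) with hAi
  have d1 : ent p (fun ω => (X i ω, fun t : {t : Fin q // i < t} => X t ω))
      = EE p X (insert i Ai) :=
    ent_congr _ _
      (fun z => extFun z.1 (fun t => z.2 ⟨t.1, (Finset.mem_filter.mp t.2).2⟩))
      (fun G => (G ⟨i, Finset.mem_insert_self i Ai⟩,
        fun t : {t : Fin q // i < t} => G ⟨t.1, Finset.mem_insert_of_mem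
          (Finset.mem_filter.mpr ⟨Finset.mem_univ _, t.2⟩)⟩))
      (fun ω => extFun_spec X ω)
      (fun ω => rfl)
  have d2 : ent p (fun ω => (Y ω, fun t : {t : Fin q // i < t} => X t ω))
      = EEY p X Y Ai :=
    ent_congr _ _
      (fun z => ((fun t => z.2 ⟨t.1, (Finset.mem_filter.mp t.2).2⟩), z.1))
      (fun z => (z.2, fun t : {t : Fin q // i < t} =>
        z.1 ⟨t.1, Finset.mem_filter.mpr ⟨Finset.mem_univ _, t.2⟩⟩))
      (fun ω => rfl) (fun ω => rfl)
  have d3 : ent p (fun ω => (X i ω, Y ω, fun t : {t : Fin q // i < t} => X t ω))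
      = EEY p X Y (insert i Ai) :=
    ent_congr _ _
      (fun z => (extFun z.1 (fun t => z.2.2 ⟨t.1, (Finset.mem_filter.mp t.2).2⟩), z.2.1))
      (fun z => (z.1 ⟨i, Finset.mem_insert_self i Ai⟩,
        (z.2, fun t : {t : Fin q // i < t} => z.1 ⟨t.1, Finset.mem_insert_of_mem
          (Finset.mem_filter.mpr ⟨Finset.mem_univ _, t.2⟩)⟩)))
      (fun ω => by
        show (extFun (X i ω) (XF X Ai ω), Y ω) = (XF X (insert i Ai) ω, Y ω)
        rw [extFun_spec X ω])
      (fun ω => rfl)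
  have d4 : ent p (fun ω => fun t : {t : Fin q // i < t} => X t ω) = EE p X Ai :=
    ent_congr _ _
      (fun z => fun t : {t : Fin q // t ∈ Ai} => z ⟨t.1, (Finset.mem_filter.mp t.2).2⟩)
      (fun z => fun t : {t : Fin q // i < t} =>
        z ⟨t.1, Finset.mem_filter.mpr ⟨Finset.mem_univ _, t.2⟩⟩)
      (fun ω => rfl) (fun ω => rfl)
  simp only [condMI]
  rw [d1, d2, d3, d4]
  ring

lemma rhs_eq (X : ∀ i, Ω → 𝒳 i) (Y : Ω → B) (S : Finset (Fin q)) :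
    condMI p (fun ω => fun t : {t : Fin q // t ∈ S} => X t ω) Y
        (fun ω => fun t : {t : Fin q // t ∉ S} => X t ω)
      = (EEY p X Y Sᶜ - EE p X Sᶜ) - (EEY p X Y Finset.univ - EE p X Finset.univ) := by
  have r1 : ent p (fun ω => ((fun t : {t : Fin q // t ∈ S} => X t ω),
        (fun t : {t : Fin q // t ∉ S} => X t ω)))
      = EE p X Finset.univ :=
    ent_congr _ _
      (fun z => fun t : {t : Fin q // t ∈ Finset.univ} =>
        if h : t.1 ∈ S then z.1 ⟨t.1, h⟩ else z.2 ⟨t.1, h⟩)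
      (fun G => ((fun t => G ⟨t.1, Finset.mem_univ _⟩),
        (fun t => G ⟨t.1, Finset.mem_univ _⟩)))
      (fun ω => by
        funext t
        show (if h : t.1 ∈ S then X t.1 ω else X t.1 ω) = X t.1 ω
        by_cases h : t.1 ∈ S
        · rw [dif_pos h]
        · rw [dif_neg h])
      (fun ω => rfl)
  have r2 : ent p (fun ω => (Y ω, fun t : {t : Fin q // t ∉ S} => X t ω))
      = EEY p X Y Sᶜ :=
    ent_congr _ _
      (fun z => ((fun t : {t : Fin q // t ∈ Sᶜ} => z.2 ⟨t.1, Finset.mem_compl.mp t.2⟩), z.1))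
      (fun z => (z.2, fun t : {t : Fin q // t ∉ S} => z.1 ⟨t.1, Finset.mem_compl.mpr t.2⟩))
      (fun ω => rfl) (fun ω => rfl)
  have r3 : ent p (fun ω => ((fun t : {t : Fin q // t ∈ S} => X t ω), Y ω,
        (fun t : {t : Fin q // t ∉ S} => X t ω)))
      = EEY p X Y Finset.univ :=
    ent_congr _ _
      (fun z => ((fun t : {t : Fin q // t ∈ Finset.univ} =>
        if h : t.1 ∈ S then z.1 ⟨t.1, h⟩ else z.2.2 ⟨t.1, h⟩), z.2.1))
      (fun z => ((fun t => z.1 ⟨t.1, Finset.mem_univ _⟩),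
        (z.2, fun t => z.1 ⟨t.1, Finset.mem_univ _⟩)))
      (fun ω => by
        show ((fun t : {t : Fin q // t ∈ Finset.univ} =>
            if h : t.1 ∈ S then X t.1 ω else X t.1 ω), Y ω) = (XF X Finset.univ ω, Y ω)
        refine congrArg (fun w => (w, Y ω)) ?_
        funext t
        show (if h : t.1 ∈ S then X t.1 ω else X t.1 ω) = X t.1 ω
        by_cases h : t.1 ∈ S
        · rw [dif_pos h]
        · rw [dif_neg h])
      (fun ω => rfl)
  have r4 : ent p (fun ω => fun t : {t : Fin q // t ∉ S} => X t ω) = EE p X Sᶜ :=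
    ent_congr _ _
      (fun z => fun t : {t : Fin q // t ∈ Sᶜ} => z ⟨t.1, Finset.mem_compl.mp t.2⟩)
      (fun z => fun t : {t : Fin q // t ∉ S} => z ⟨t.1, Finset.mem_compl.mpr t.2⟩)
      (fun ω => rfl) (fun ω => rfl)
  simp only [condMI]
  rw [r1, r2, r3, r4]
  ring

end Final


/-- For mutually independent finitely-valued `X_1,…,X_q` and any finitely-valued `Ỹ`
on the same finite probability space, and every `S ⊆ {1,…,q}`:
`∑_{i∈S} I(X_i;Ỹ|X_{i+1:q}) ≤ I(X_S;Ỹ|X_{S^c})`. -/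
theorem stmt10 {Ω : Type} [Fintype Ω] (q : ℕ) (𝒳 : Fin q → Type)
    [∀ i, Fintype (𝒳 i)] [∀ i, DecidableEq (𝒳 i)]
    {B : Type} [Fintype B] [DecidableEq B]
    (p : Ω → ℝ) (hp : ∀ ω, 0 ≤ p ω) (hp1 : ∑ ω, p ω = 1)
    (X : ∀ i, Ω → 𝒳 i) (Y : Ω → B)
    (hind : ∀ x : ∀ i, 𝒳 i,
      pmOf p (fun ω => fun i => X i ω) x = ∏ i, pmOf p (X i) (x i))
    (S : Finset (Fin q)) :
    ∑ i ∈ S, condMI p (X i) Y (fun ω => fun t : {t : Fin q // i < t} => X t ω)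
      ≤ condMI p (fun ω => fun t : {t : Fin q // t ∈ S} => X t ω) Y
          (fun ω => fun t : {t : Fin q // t ∉ S} => X t ω) := by
  classical
  induction S using Finset.induction_on_max with
  | empty =>
      rw [rhs_eq X Y ∅, Finset.sum_empty, Finset.compl_empty]
      simp
  | insert a s hlt ih =>
      have has : a ∉ s := fun h => lt_irrefl a (hlt a h)
      rw [Finset.sum_insert has, rhs_eq X Y (insert a s), lhs_eq X Y a]
      rw [rhs_eq X Y s] at ih
      have hsub : Finset.filter (fun t => a < t) Finset.univ ⊆ (insert a s)ᶜ := by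
        intro t ht
        rw [Finset.mem_compl, Finset.mem_insert]
        have hat : a < t := (Finset.mem_filter.mp ht).2
        rintro (h1 | hts)
        · exact lt_irrefl a (h1 ▸ hat)
        · exact absurd (hlt t hts) (not_lt_of_gt hat)
      have hnotmem : a ∉ (insert a s)ᶜ := by simp
      have hK := Kstep hp hp1 X Y hind hsub hnotmem
      have hins : insert a ((insert a s)ᶜ) = sᶜ := by
        ext t
        by_cases h : t = a
        · subst h
          simp [has]
        · simp [Finset.mem_insert, h]
      rw [hins] at hK
      linarith [ih, hK]
end
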